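/- arXiv:math/0410487 — 4 statements merged into one kernel-verified Lean document; each statement's English description precedes it below -/
import Mathlib

section
/- Let q̂^1, …, q̂^r ∈ m be power series generating the ideal m as an O-module (i.e. q̂^1,…,q̂^r form a formal coordinate system centered at 0). Suppose p̂_1, …, p̂_r are ℂ[ħ]-linear operators on ℂ[ħ][[q]] of the form p̂_a = Σ_b M_{G^b_a}∘(ħθ_b) + M_{F_a}, where the r×r matrix (G^b_a) has entries in O and is invertible over O and F_a ∈ m, and suppose the commutation relations [p̂_a, M_{q̂^b}] = ħ·δ^b_a·M_{q̂^b} and [p̂_a, p̂_b] = 0 hold for all a, b. Then: (i) Σ_c G^c_a·θ_c q̂^b = δ^b_a·q̂^b for all a, b; consequently each θ_b q̂^a is divisible by q̂^a in O, the log-Jacobi matrix H^a_b := (θ_b q̂^a)/q̂^a has entries in O, is invertible over O, and (G^b_a) is its inverse; and (ii) there exists F ∈ m such that F_a = Σ_c G^c_a·θ_c F for all a. -/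
/-!
Work over ℂ.  `OO r = ℂ[[q¹,…,qʳ]]` is the ring of formal power series,
`m` its maximal ideal (power series with zero constant term), and
`θ_a = qᵃ·∂/∂qᵃ` the logarithmic partial derivative.
-/

noncomputable section

/-- `𝒪 = ℂ[[q¹,…,qʳ]]`, the ring of formal power series. -/
abbrev OO (r : ℕ) := MvPowerSeries (Fin r) ℂ

/-- The logarithmic derivative `θ_a = qᵃ ∂/∂qᵃ` on `ℂ[[q]]`:
on the monomial `q^d` it acts by multiplication by `d a`. -/
def thetaO {r : ℕ} (a : Fin r) (F : OO r) : OO r := fun d => (d a : ℂ) * F d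

/-- The constant term at `q = 0`; membership in `m` is `ccO F = 0`. -/
def ccO {r : ℕ} : OO r →+* ℂ := MvPowerSeries.constantCoeff (σ := Fin r) (R := ℂ)

/-- total degree of a monomial exponent -/
def degOf {r : ℕ} (d : Fin r →₀ ℕ) : ℕ := d.sum fun _ k => k

/-- The formal exponential `exp(δ) = Σ_k δ^k/k!` of a power series `δ` with zero
constant term; for such `δ` the coefficient of `q^d` only receives contributions
from `k ≤ |d|`, so the truncated sum below is the full exponential. -/
def fexpO {r : ℕ} (δ : OO r) : OO r :=
  fun d => ∑ k ∈ Finset.range (degOf d + 1), (k.factorial : ℂ)⁻¹ * ((δ ^ k) d)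

/-- `ℂ[ħ][[q¹,…,qʳ]]`: formal power series in `q` with coefficients polynomials in `ħ`. -/
abbrev RR (r : ℕ) := MvPowerSeries (Fin r) (Polynomial ℂ)

/-- The logarithmic derivative `θ_a = qᵃ ∂/∂qᵃ` on `ℂ[ħ][[q]]`. -/
def thetaP {r : ℕ} (a : Fin r) (x : RR r) : RR r :=
  fun d => ((d a : ℕ) : Polynomial ℂ) * x d

/-- `ħ` as an element of `ℂ[ħ][[q]]`. -/
def hbarP (r : ℕ) : RR r := MvPowerSeries.C (σ := Fin r) (R := Polynomial ℂ) Polynomial.X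

/-- The inclusion `ℂ[[q]] → ℂ[ħ][[q]]`. -/
def iotaP {r : ℕ} : OO r →+* RR r :=
  MvPowerSeries.map (σ := Fin r) (Polynomial.C : ℂ →+* Polynomial ℂ)

/-- The first-order operator `p̂_a = Σ_b M_{G^b_a} ∘ (ħ θ_b) + M_{F_a}`
on `ℂ[ħ][[q]]` (it is automatically `ℂ[ħ]`-linear). -/
def phat {r : ℕ} (G : Matrix (Fin r) (Fin r) (OO r)) (F : Fin r → OO r)
    (a : Fin r) (x : RR r) : RR r :=
  (∑ b, iotaP (G b a) * (hbarP r * thetaP b x)) + iotaP (F a) * x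

namespace GCAux
open MvPowerSeries Polynomial

variable {r : ℕ}

lemma coeff_thetaO (c : Fin r) (f : OO r) (d : Fin r →₀ ℕ) :
    MvPowerSeries.coeff (R := ℂ) d (thetaO c f) = (d c : ℂ) * MvPowerSeries.coeff (R := ℂ) d f := rfl

lemma coeff_thetaP (c : Fin r) (x : RR r) (d : Fin r →₀ ℕ) :
    MvPowerSeries.coeff (R := Polynomial ℂ) d (thetaP c x)
      = ((d c : ℕ) : Polynomial ℂ) * MvPowerSeries.coeff (R := Polynomial ℂ) d x := rfl

lemma coeff_iotaP (g : OO r) (d : Fin r →₀ ℕ) :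
    MvPowerSeries.coeff (R := Polynomial ℂ) d (iotaP g)
      = Polynomial.C (MvPowerSeries.coeff (R := ℂ) d g) := by
  simp [iotaP, MvPowerSeries.coeff_map]

lemma thetaO_zero (c : Fin r) : thetaO c (0 : OO r) = 0 := by
  ext d; simp [coeff_thetaO]

lemma thetaO_sum {ι : Type*} (s : Finset ι) (f : ι → OO r) (c : Fin r) :
    thetaO c (∑ i ∈ s, f i) = ∑ i ∈ s, thetaO c (f i) := by
  ext d
  rw [coeff_thetaO, map_sum, map_sum, Finset.mul_sum]
  exact Finset.sum_congr rfl fun i _ => (coeff_thetaO c (f i) d).symm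

lemma thetaO_mul (c : Fin r) (f g : OO r) :
    thetaO c (f * g) = thetaO c f * g + f * thetaO c g := by
  ext d
  rw [map_add, coeff_thetaO, MvPowerSeries.coeff_mul, MvPowerSeries.coeff_mul,
    MvPowerSeries.coeff_mul, Finset.mul_sum, ← Finset.sum_add_distrib]
  refine Finset.sum_congr rfl fun p hp => ?_
  rw [Finset.HasAntidiagonal.mem_antidiagonal] at hp
  rw [coeff_thetaO, coeff_thetaO]
  have h1 : d c = p.1 c + p.2 c := by rw [← hp]; simp
  rw [h1]; push_cast; ring

lemma thetaO_one (c : Fin r) : thetaO c (1 : OO r) = 0 := by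
  ext d
  rw [coeff_thetaO, MvPowerSeries.coeff_one, map_zero]
  split_ifs with h
  · subst h; simp
  · simp

lemma thetaO_X (c e : Fin r) :
    thetaO c (MvPowerSeries.X e : OO r) = if c = e then MvPowerSeries.X e else 0 := by
  classical
  ext d
  rw [coeff_thetaO, MvPowerSeries.coeff_X]
  by_cases hd : d = Finsupp.single e 1
  · subst hd
    rw [if_pos rfl, mul_one]
    by_cases hce : c = e
    · subst hce
      rw [if_pos rfl, MvPowerSeries.coeff_X, if_pos rfl]
      simp
    · rw [if_neg hce, map_zero]
      have : e ≠ c := fun h => hce h.symm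
      simp [Finsupp.single_apply, this]
  · rw [if_neg hd, mul_zero]
    by_cases hce : c = e
    · rw [if_pos hce, MvPowerSeries.coeff_X, if_neg hd]
    · rw [if_neg hce, map_zero]

lemma thetaP_iotaP (c : Fin r) (g : OO r) : thetaP c (iotaP g) = iotaP (thetaO c g) := by
  ext d
  rw [coeff_thetaP, coeff_iotaP, coeff_iotaP, coeff_thetaO, map_mul, map_natCast]

lemma thetaP_one (c : Fin r) : thetaP c (1 : RR r) = 0 := by
  ext d
  rw [coeff_thetaP, MvPowerSeries.coeff_one, map_zero]
  split_ifs with h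
  · subst h; simp
  · simp

lemma thetaP_add (c : Fin r) (x y : RR r) : thetaP c (x + y) = thetaP c x + thetaP c y := by
  ext d
  simp only [coeff_thetaP, map_add]
  ring

lemma thetaP_hbar_mul (c : Fin r) (x : RR r) :
    thetaP c (hbarP r * x) = hbarP r * thetaP c x := by
  ext d
  rw [coeff_thetaP]
  simp only [hbarP, MvPowerSeries.coeff_C_mul]
  rw [coeff_thetaP]
  ring

/-- `D_a u = ∑_c G^c_a θ_c u`. -/
def DA (G : Matrix (Fin r) (Fin r) (OO r)) (a : Fin r) (u : OO r) : OO r :=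
  ∑ c, G c a * thetaO c u

lemma DA_one (G : Matrix (Fin r) (Fin r) (OO r)) (a : Fin r) : DA G a 1 = 0 := by
  unfold DA
  simp [thetaO_one]

lemma phat_one (G : Matrix (Fin r) (Fin r) (OO r)) (F : Fin r → OO r) (a : Fin r) :
    phat G F a 1 = iotaP (F a) := by
  unfold phat
  simp [thetaP_one]

lemma phat_iotaP (G : Matrix (Fin r) (Fin r) (OO r)) (F : Fin r → OO r) (a : Fin r)
    (g : OO r) : phat G F a (iotaP g) = hbarP r * iotaP (DA G a g) + iotaP (F a * g) := by
  unfold phat DA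
  rw [map_sum, Finset.mul_sum, map_mul]
  refine congrArg₂ (· + ·) ?_ rfl
  refine Finset.sum_congr rfl fun c _ => ?_
  rw [thetaP_iotaP, map_mul]
  ring

lemma phat_add (G : Matrix (Fin r) (Fin r) (OO r)) (F : Fin r → OO r) (a : Fin r)
    (x y : RR r) : phat G F a (x + y) = phat G F a x + phat G F a y := by
  unfold phat
  have : ∀ b : Fin r, iotaP (G b a) * (hbarP r * thetaP b (x + y))
      = iotaP (G b a) * (hbarP r * thetaP b x) + iotaP (G b a) * (hbarP r * thetaP b y) := by
    intro b; rw [thetaP_add]; ring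
  rw [Finset.sum_congr rfl fun b _ => this b, Finset.sum_add_distrib]
  ring

lemma phat_hbar (G : Matrix (Fin r) (Fin r) (OO r)) (F : Fin r → OO r) (a : Fin r)
    (x : RR r) : phat G F a (hbarP r * x) = hbarP r * phat G F a x := by
  unfold phat
  rw [mul_add, Finset.mul_sum]
  refine congrArg₂ (· + ·) ?_ ?_
  · refine Finset.sum_congr rfl fun b _ => ?_
    rw [thetaP_hbar_mul]; ring
  · ring

lemma phat_phat (G : Matrix (Fin r) (Fin r) (OO r)) (F : Fin r → OO r) (a b : Fin r)
    (g : OO r) :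
    phat G F a (phat G F b (iotaP g)) =
      hbarP r * (hbarP r * iotaP (DA G a (DA G b g)))
        + hbarP r * iotaP (DA G a (F b * g) + F a * DA G b g)
        + iotaP (F a * (F b * g)) := by
  rw [phat_iotaP, phat_add, phat_hbar, phat_iotaP, phat_iotaP, map_add]
  ring

lemma poly2 (a b c a' b' c' : ℂ)
    (h : Polynomial.X * (Polynomial.X * Polynomial.C a) + Polynomial.X * Polynomial.C b
          + Polynomial.C c
       = Polynomial.X * (Polynomial.X * Polynomial.C a') + Polynomial.X * Polynomial.C b'
          + Polynomial.C c') :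
    a = a' ∧ b = b' := by
  have e : ∀ x y z : ℂ, Polynomial.X * (Polynomial.X * Polynomial.C x)
        + Polynomial.X * Polynomial.C y + Polynomial.C z
      = Polynomial.C x * Polynomial.X ^ 2 + Polynomial.C y * Polynomial.X ^ 1
        + Polynomial.C z * Polynomial.X ^ 0 := by
    intros; ring
  rw [e, e] at h
  constructor
  · have h2 := congrArg (fun p => Polynomial.coeff p 2) h
    simpa [Polynomial.coeff_C_mul, Polynomial.coeff_X_pow] using h2
  · have h1 := congrArg (fun p => Polynomial.coeff p 1) h
    simpa [Polynomial.coeff_C_mul, Polynomial.coeff_X_pow] using h1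

lemma extract1 (u v : OO r) (h : hbarP r * iotaP u = hbarP r * iotaP v) : u = v := by
  ext d
  have h' := congrArg (MvPowerSeries.coeff (R := Polynomial ℂ) d) h
  simp only [hbarP, MvPowerSeries.coeff_C_mul, coeff_iotaP] at h'
  rw [mul_comm Polynomial.X, mul_comm Polynomial.X] at h'
  have h2 := congrArg (fun p => Polynomial.coeff p 1) h'
  simpa [Polynomial.coeff_C_mul, Polynomial.coeff_X_one] using h2

lemma extract0 (u : OO r) (h : hbarP r * iotaP u = 0) : u = 0 :=
  extract1 u 0 (by rw [h, map_zero, mul_zero])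

lemma extract2 (u2 u1 u0 v2 v1 v0 : OO r)
    (h : hbarP r * (hbarP r * iotaP u2) + hbarP r * iotaP u1 + iotaP u0
       = hbarP r * (hbarP r * iotaP v2) + hbarP r * iotaP v1 + iotaP v0) :
    u2 = v2 ∧ u1 = v1 := by
  have key : ∀ d, MvPowerSeries.coeff (R := ℂ) d u2 = MvPowerSeries.coeff (R := ℂ) d v2 ∧
      MvPowerSeries.coeff (R := ℂ) d u1 = MvPowerSeries.coeff (R := ℂ) d v1 := by
    intro d
    have h' := congrArg (MvPowerSeries.coeff (R := Polynomial ℂ) d) h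
    simp only [map_add, hbarP, MvPowerSeries.coeff_C_mul, coeff_iotaP] at h'
    exact poly2 _ _ _ _ _ _ h'
  exact ⟨MvPowerSeries.ext fun d => (key d).1, MvPowerSeries.ext fun d => (key d).2⟩

lemma tripleswap (f : Fin r → Fin r → Fin r → OO r) :
    (∑ e, ∑ k, ∑ m, f e k m) = ∑ e, ∑ k, ∑ m, f m k e := by
  calc (∑ e, ∑ k, ∑ m, f e k m)
      = ∑ e, ∑ m, ∑ k, f e k m := Finset.sum_congr rfl fun e _ => Finset.sum_comm
    _ = ∑ m, ∑ e, ∑ k, f e k m := Finset.sum_comm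
    _ = ∑ m, ∑ k, ∑ e, f e k m := Finset.sum_congr rfl fun m _ => Finset.sum_comm

end GCAux

/-- **Structure of generalized coordinates** (Proposition 3.1).  Let
`q̂¹,…,q̂ʳ ∈ m` generate `m` as an `𝒪`-module and let
`p̂_a = Σ_b M_{G^b_a}∘(ħθ_b) + M_{F_a}` (with `(G^b_a)` invertible over `𝒪` and
`F_a ∈ m`) satisfy `[p̂_a, M_{q̂^b}] = ħδ^b_a M_{q̂^b}` and `[p̂_a, p̂_b] = 0`.
Then (i) `Σ_c G^c_a θ_c q̂^b = δ^b_a q̂^b`; each `θ_b q̂^a` is divisible by `q̂^a`,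
the log-Jacobi matrix `H^a_b = (θ_b q̂^a)/q̂^a` has entries in `𝒪` and is inverse
to `G`; and (ii) there is `F ∈ m` with `F_a = Σ_c G^c_a θ_c F` for all `a`. -/
theorem generalized_coordinates_structure {r : ℕ} (hr : 1 ≤ r)
    (qhat : Fin r → OO r)
    (hgen : Ideal.span (Set.range qhat) =
      RingHom.ker (MvPowerSeries.constantCoeff (σ := Fin r) (R := ℂ)))
    (G : Matrix (Fin r) (Fin r) (OO r)) (hGunit : IsUnit G)
    (F : Fin r → OO r) (hF : ∀ a, ccO (F a) = 0)
    (hcomm1 : ∀ a b x, phat G F a (iotaP (qhat b) * x) - iotaP (qhat b) * phat G F a x =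
      if b = a then hbarP r * (iotaP (qhat b) * x) else 0)
    (hcomm2 : ∀ a b x, phat G F a (phat G F b x) = phat G F b (phat G F a x)) :
    (∀ a b, (∑ c, G c a * thetaO c (qhat b)) = if a = b then qhat b else 0) ∧
    (∃ H : Matrix (Fin r) (Fin r) (OO r),
      (∀ a b, thetaO b (qhat a) = H a b * qhat a) ∧ H * G = 1 ∧ G * H = 1) ∧
    (∃ F' : OO r, ccO F' = 0 ∧ ∀ a, F a = ∑ c, G c a * thetaO c F') := by
  classical
  obtain ⟨U, hU⟩ := hGunit
  set H : Matrix (Fin r) (Fin r) (OO r) := (↑U⁻¹ : Matrix (Fin r) (Fin r) (OO r)) with hHdef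
  have hHG : H * G = 1 := by
    rw [hHdef, ← hU]; exact U.inv_mul
  have hGH : G * H = 1 := by
    rw [hHdef, ← hU]; exact U.mul_inv
  have hHGe : ∀ i j, (∑ k, H i k * G k j) = if i = j then (1 : OO r) else 0 := by
    intro i j
    have h := congrFun (congrFun hHG i) j
    rwa [Matrix.mul_apply, Matrix.one_apply] at h
  have hGHe : ∀ i j, (∑ k, G i k * H k j) = if i = j then (1 : OO r) else 0 := by
    intro i j
    have h := congrFun (congrFun hGH i) j
    rwa [Matrix.mul_apply, Matrix.one_apply] at h
  -- Part (i): D_a q̂^b = δ q̂^b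
  have hDq : ∀ a b, GCAux.DA G a (qhat b) = if b = a then qhat b else 0 := by
    intro a b
    have h := hcomm1 a b 1
    rw [mul_one, GCAux.phat_one, GCAux.phat_iotaP] at h
    have hcom : iotaP (F a * qhat b) = iotaP (qhat b) * iotaP (F a) := by
      rw [← map_mul, mul_comm]
    rw [hcom, add_sub_cancel_right] at h
    by_cases hba : b = a
    · rw [if_pos hba] at h ⊢
      exact GCAux.extract1 _ _ h
    · rw [if_neg hba] at h ⊢
      exact GCAux.extract0 _ h
  have goal1 : ∀ a b, (∑ c, G c a * thetaO c (qhat b)) = if a = b then qhat b else 0 := by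
    intro a b
    have h := hDq a b
    unfold GCAux.DA at h
    rw [h]
    rcases eq_or_ne a b with hab | hab
    · subst hab; simp
    · rw [if_neg (fun hh => hab (hh.symm)), if_neg hab]
  -- θ_c u = ∑_k H^k_c D_k u
  have hT : ∀ (c : Fin r) (u : OO r), (∑ k, H k c * GCAux.DA G k u) = thetaO c u := by
    intro c u
    unfold GCAux.DA
    calc (∑ k, H k c * ∑ e, G e k * thetaO e u)
        = ∑ k, ∑ e, G e k * H k c * thetaO e u := by
          refine Finset.sum_congr rfl fun k _ => ?_
          rw [Finset.mul_sum]
          exact Finset.sum_congr rfl fun e _ => by ring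
      _ = ∑ e, (∑ k, G e k * H k c) * thetaO e u := by
          rw [Finset.sum_comm]
          exact Finset.sum_congr rfl fun e _ => (Finset.sum_mul _ _ _).symm
      _ = thetaO c u := by
          rw [Finset.sum_congr rfl fun e (_ : e ∈ Finset.univ) => by rw [hGHe e c]]
          simp
  -- symmetry relations from [p̂_a, p̂_b] = 0
  have hsym : ∀ a b g, GCAux.DA G a (GCAux.DA G b g) = GCAux.DA G b (GCAux.DA G a g) ∧
      GCAux.DA G a (F b * g) + F a * GCAux.DA G b g
        = GCAux.DA G b (F a * g) + F b * GCAux.DA G a g := by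
    intro a b g
    have h := hcomm2 a b (iotaP g)
    rw [GCAux.phat_phat, GCAux.phat_phat] at h
    exact GCAux.extract2 _ _ _ _ _ _ h
  have hA : ∀ a b, GCAux.DA G a (F b) = GCAux.DA G b (F a) := by
    intro a b
    have h := (hsym a b 1).2
    rw [mul_one, mul_one, GCAux.DA_one, GCAux.DA_one, mul_zero, mul_zero, add_zero,
      add_zero] at h
    exact h
  have hXne : ∀ e : Fin r, (MvPowerSeries.X e : OO r) ≠ 0 := by
    intro e h
    have h2 := congrArg (MvPowerSeries.coeff (R := ℂ) (Finsupp.single e 1)) h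
    rw [MvPowerSeries.coeff_X, if_pos rfl, map_zero] at h2
    exact one_ne_zero h2
  have hDX : ∀ (a' : Fin r) (e : Fin r),
      GCAux.DA G a' (MvPowerSeries.X e : OO r) = G e a' * MvPowerSeries.X e := by
    intro a' e
    unfold GCAux.DA
    rw [Finset.sum_congr rfl fun c (_ : c ∈ Finset.univ) => by rw [GCAux.thetaO_X]]
    simp
  have hexp : ∀ a' b' (e : Fin r),
      GCAux.DA G a' (GCAux.DA G b' (MvPowerSeries.X e))
        = (GCAux.DA G a' (G e b') + G e b' * G e a') * MvPowerSeries.X e := by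
    intro a' b' e
    rw [hDX]
    unfold GCAux.DA
    rw [Finset.sum_congr rfl fun c (_ : c ∈ Finset.univ) => by
      rw [GCAux.thetaO_mul, GCAux.thetaO_X]]
    rw [Finset.sum_congr rfl fun c (_ : c ∈ Finset.univ) => mul_add (G c a') _ _,
      Finset.sum_add_distrib, add_mul, Finset.sum_mul]
    congr 1
    · exact Finset.sum_congr rfl fun c _ => by ring
    · simp only [mul_ite, mul_zero, Finset.sum_ite_eq', Finset.mem_univ, if_true]
      ring
  have hB : ∀ a b (e : Fin r), GCAux.DA G a (G e b) = GCAux.DA G b (G e a) := by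
    intro a b e
    have h := (hsym a b (MvPowerSeries.X e)).1
    rw [hexp a b e, hexp b a e] at h
    have h2 : (GCAux.DA G a (G e b) - GCAux.DA G b (G e a)) * MvPowerSeries.X e = 0 := by
      linear_combination h
    rcases mul_eq_zero.mp h2 with h3 | h3
    · exact sub_eq_zero.mp h3
    · exact absurd h3 (hXne e)
  -- derivative of H
  have hD1 : ∀ b (e : Fin r) c, (∑ k, thetaO c (H b k) * G k e)
      = -∑ k, H b k * thetaO c (G k e) := by
    intro b e c
    have h0 : thetaO c (∑ k, H b k * G k e) = 0 := by
      rw [hHGe b e]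
      split_ifs
      · exact GCAux.thetaO_one c
      · exact GCAux.thetaO_zero c
    rw [GCAux.thetaO_sum,
      Finset.sum_congr rfl fun k (_ : k ∈ Finset.univ) => GCAux.thetaO_mul c (H b k) (G k e),
      Finset.sum_add_distrib] at h0
    exact eq_neg_of_add_eq_zero_left h0
  have collapse : ∀ (A : Fin r → OO r) (f : Fin r),
      (∑ e, (∑ k, A k * G k e) * H e f) = A f := by
    intro A f
    have step : ∀ e : Fin r, (∑ k, A k * G k e) * H e f = ∑ k, A k * (G k e * H e f) := by
      intro e
      rw [Finset.sum_mul]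
      exact Finset.sum_congr rfl fun k _ => by ring
    rw [Finset.sum_congr rfl fun e (_ : e ∈ Finset.univ) => step e, Finset.sum_comm]
    rw [Finset.sum_congr rfl fun k (_ : k ∈ Finset.univ) => (Finset.mul_sum _ _ _).symm]
    rw [Finset.sum_congr rfl fun k (_ : k ∈ Finset.univ) => by rw [hGHe k f]]
    simp
  have hθH : ∀ (b f c : Fin r), thetaO c (H b f)
      = -∑ e, (∑ k, H b k * thetaO c (G k e)) * H e f := by
    intro b f c
    rw [← collapse (fun k => thetaO c (H b k)) f]
    rw [Finset.sum_congr rfl fun e (_ : e ∈ Finset.univ) => by rw [hD1 b e c]]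
    rw [← Finset.sum_neg_distrib]
    exact Finset.sum_congr rfl fun e _ => by ring
  have hC : ∀ (b c c' : Fin r), thetaO c (H b c') = thetaO c' (H b c) := by
    intro b c c'
    rw [hθH b c' c, hθH b c c']
    congr 1
    have step : ∀ (cc cc' : Fin r), (∑ e, (∑ k, H b k * thetaO cc (G k e)) * H e cc')
        = ∑ e, ∑ k, ∑ m, H b k * H m cc * H e cc' * GCAux.DA G m (G k e) := by
      intro cc cc'
      refine Finset.sum_congr rfl fun e _ => ?_
      rw [Finset.sum_mul]
      refine Finset.sum_congr rfl fun k _ => ?_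
      rw [← hT cc (G k e), Finset.mul_sum, Finset.sum_mul]
      refine Finset.sum_congr rfl fun m _ => by ring
    rw [step c c', step c' c,
      GCAux.tripleswap (fun e k m => H b k * H m c * H e c' * GCAux.DA G m (G k e))]
    refine Finset.sum_congr rfl fun e _ => Finset.sum_congr rfl fun k _ =>
      Finset.sum_congr rfl fun m _ => ?_
    rw [hB m e k]
    ring
  -- the closed log-1-form E
  set E : Fin r → OO r := fun c => ∑ a, H a c * F a with hE
  have hEsym : ∀ c c', thetaO c (E c') = thetaO c' (E c) := by
    intro c c'
    simp only [hE]
    rw [GCAux.thetaO_sum, GCAux.thetaO_sum]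
    rw [Finset.sum_congr rfl fun a (_ : a ∈ Finset.univ) => GCAux.thetaO_mul c (H a c') (F a),
        Finset.sum_congr rfl fun a (_ : a ∈ Finset.univ) => GCAux.thetaO_mul c' (H a c) (F a)]
    rw [Finset.sum_add_distrib, Finset.sum_add_distrib]
    congr 1
    · exact Finset.sum_congr rfl fun a _ => by rw [hC a c c']
    · have exp : ∀ (cc cc' : Fin r), (∑ a, H a cc' * thetaO cc (F a))
          = ∑ a, ∑ k, H a cc' * (H k cc * GCAux.DA G k (F a)) := by
        intro cc cc'
        refine Finset.sum_congr rfl fun a _ => ?_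
        rw [← hT cc (F a), Finset.mul_sum]
      rw [exp c c', exp c' c, Finset.sum_comm]
      refine Finset.sum_congr rfl fun a _ => Finset.sum_congr rfl fun k _ => ?_
      rw [hA a k]
      ring
  have hE0 : ∀ c, MvPowerSeries.coeff (R := ℂ) 0 (E c) = 0 := by
    intro c
    simp only [hE]
    rw [map_sum]
    refine Finset.sum_eq_zero fun a _ => ?_
    rw [MvPowerSeries.coeff_zero_eq_constantCoeff_apply, map_mul]
    have : MvPowerSeries.constantCoeff (σ := Fin r) (R := ℂ) (F a) = 0 := hF a
    rw [this, mul_zero]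
  -- construct the potential F'
  let F' : OO r := fun d => if h : d = 0 then 0 else
    (((d (d.support.min' (Finsupp.support_nonempty_iff.mpr h)) : ℕ) : ℂ))⁻¹ *
      MvPowerSeries.coeff (R := ℂ) d (E (d.support.min' (Finsupp.support_nonempty_iff.mpr h)))
  have hmin : ∀ (d : Fin r →₀ ℕ) (h : d ≠ 0),
      d (d.support.min' (Finsupp.support_nonempty_iff.mpr h)) ≠ 0 := by
    intro d h
    exact Finsupp.mem_support_iff.mp
      (Finset.min'_mem d.support (Finsupp.support_nonempty_iff.mpr h))
  have hcoeffF' : ∀ (d : Fin r →₀ ℕ), MvPowerSeries.coeff (R := ℂ) d F' = F' d := fun d => rfl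
  have hθF' : ∀ c, thetaO c F' = E c := by
    intro c
    ext d
    rw [GCAux.coeff_thetaO]
    by_cases h : d = 0
    · subst h
      rw [hE0 c, hcoeffF']
      simp
    · set c₀ := d.support.min' (Finsupp.support_nonempty_iff.mpr h) with hc₀
      have hd0 : ((d c₀ : ℕ) : ℂ) ≠ 0 := Nat.cast_ne_zero.mpr (hmin d h)
      have hsymd := congrArg (MvPowerSeries.coeff (R := ℂ) d) (hEsym c c₀)
      rw [GCAux.coeff_thetaO, GCAux.coeff_thetaO] at hsymd
      have hF'd : MvPowerSeries.coeff (R := ℂ) d F'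
          = ((d c₀ : ℕ) : ℂ)⁻¹ * MvPowerSeries.coeff (R := ℂ) d (E c₀) := by
        rw [hcoeffF']
        simp only [F', dif_neg h]
        rfl
      rw [hF'd]
      field_simp
      linear_combination hsymd
  refine ⟨goal1, ⟨H, ?_, hHG, hGH⟩, F', ?_, ?_⟩
  · -- θ_b q̂^a = H^a_b q̂^a
    intro a b
    rw [← hT b (qhat a)]
    rw [Finset.sum_congr rfl fun k (_ : k ∈ Finset.univ) => by rw [hDq k a]]
    simp only [mul_ite, mul_zero, Finset.sum_ite_eq, Finset.sum_ite_eq', Finset.mem_univ,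
      if_true]
  · -- ccO F' = 0
    show MvPowerSeries.constantCoeff (σ := Fin r) (R := ℂ) F' = 0
    rw [← MvPowerSeries.coeff_zero_eq_constantCoeff_apply, hcoeffF']
    simp [F']
  · intro a
    rw [Finset.sum_congr rfl fun c (_ : c ∈ Finset.univ) => by rw [hθF' c]]
    simp only [hE]
    have step : ∀ c : Fin r, G c a * ∑ k, H k c * F k = ∑ k, H k c * G c a * F k := by
      intro c
      rw [Finset.mul_sum]
      exact Finset.sum_congr rfl fun k _ => by ring
    rw [Finset.sum_congr rfl fun c (_ : c ∈ Finset.univ) => step c, Finset.sum_comm]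
    rw [Finset.sum_congr rfl fun k (_ : k ∈ Finset.univ) => by
      rw [← Finset.sum_mul, hHGe k a]]
    simp
end
end

section
/- Let S ∈ Mat_n(ℂ[ħ,ħ^{-1}]][[q^1,…,q^r]]) satisfy S|_{q=0} = Id. Then there exists a unique pair of matrices (S_+, S_−) with S = S_+·S_−, where S_+ ∈ Mat_n(ℂ[ħ][[q]]) and S_− ∈ Mat_n(ℂ[[ħ^{-1}]][[q]]) with S_− ≡ Id modulo ħ^{-1} (i.e. the coefficient of ħ^0 in S_− is the identity matrix and S_− has no positive powers of ħ). Moreover this factorization automatically satisfies S_+|_{q=0} = Id and S_−|_{q=0} = Id. -/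
/-!
Work over ℂ.  We represent the coefficient ring `ℂ[ħ,ħ⁻¹]]` (formal Laurent
series `Σ_{k ≤ K} c_k ħ^k` with finitely many positive powers of `ħ`) as
`LaurentSeries ℂ` in the variable `t = ħ⁻¹`; thus the coefficient of `t^k`
is the coefficient of `ħ^{-k}`.  `AA r = ℂ[ħ,ħ⁻¹]][[q¹,…,qʳ]]`, and
`θ_a = qᵃ·∂/∂qᵃ` is the logarithmic partial derivative.
-/

noncomputable section

/-- `ℂ[ħ,ħ⁻¹]]`, realized as Laurent series in `t = ħ⁻¹`. -/
abbrev LS := LaurentSeries ℂ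

/-- `ħ = t⁻¹` where `t` is the `LaurentSeries` variable. -/
def hbarL : LS := HahnSeries.single (-1 : ℤ) (1 : ℂ)

/-- `ℂ[ħ,ħ⁻¹]][[q¹,…,qʳ]]`. -/
abbrev AA (r : ℕ) := MvPowerSeries (Fin r) LS

/-- The logarithmic derivative `θ_a = qᵃ ∂/∂qᵃ`:
on the monomial `q^d` it acts by multiplication by `d a`. -/
def thetaA {r : ℕ} (a : Fin r) (x : AA r) : AA r := fun d => (d a : LS) * x d

/-- `θ_a` acting entrywise on matrices. -/
def thetaMat {r n : ℕ} (a : Fin r) (M : Matrix (Fin n) (Fin n) (AA r)) :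
    Matrix (Fin n) (Fin n) (AA r) :=
  Matrix.of fun i j => thetaA a (M i j)

/-- `ħ` as an element of `ℂ[ħ,ħ⁻¹]][[q]]`. -/
def hbarA (r : ℕ) : AA r := (MvPowerSeries.C : LS →+* AA r) hbarL

/-- The constant term at `q = 0`. -/
def ccA {r : ℕ} : AA r →+* LS := (MvPowerSeries.constantCoeff : AA r →+* LS)

/-- The embedding `ℂ → ℂ[ħ,ħ⁻¹]][[q]]`. -/
def cA (r : ℕ) : ℂ →+* AA r := (MvPowerSeries.C : LS →+* AA r).comp HahnSeries.C

/-- `x ∈ ℂ[ħ]`: `x` is a polynomial in `ħ` (no negative powers of `ħ`,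
i.e. no positive powers of `t`; finiteness is automatic for Laurent series). -/
def isPolyH (x : LS) : Prop := ∀ k : ℤ, 0 < k → x.coeff k = 0

/-- `x ∈ ℂ[[ħ⁻¹]]`: `x` is regular at `ħ = ∞` (no positive powers of `ħ`). -/
def isRegH (x : LS) : Prop := ∀ k : ℤ, k < 0 → x.coeff k = 0

/-- `x ∈ ℂ`: `x` is a constant, independent of `ħ`. -/
def isConstH (x : LS) : Prop := ∀ k : ℤ, k ≠ 0 → x.coeff k = 0

/-- A matrix over `ℂ[ħ,ħ⁻¹]][[q]]` has entries in `ℂ[ħ][[q]]`. -/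
def MatPolyH {r n : ℕ} (M : Matrix (Fin n) (Fin n) (AA r)) : Prop :=
  ∀ i j d, isPolyH (M i j d)

/-- A matrix over `ℂ[ħ,ħ⁻¹]][[q]]` has entries in `ℂ[[ħ⁻¹]][[q]]`. -/
def MatRegH {r n : ℕ} (M : Matrix (Fin n) (Fin n) (AA r)) : Prop :=
  ∀ i j d, isRegH (M i j d)

/-- A matrix over `ℂ[ħ,ħ⁻¹]][[q]]` has entries in `ℂ[[q]]`,
i.e. is independent of `ħ`. -/
def MatConstH {r n : ℕ} (M : Matrix (Fin n) (Fin n) (AA r)) : Prop :=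
  ∀ i j d, isConstH (M i j d)

/-- Flatness: `ħ(θ_aΩ_b − θ_bΩ_a) + Ω_aΩ_b − Ω_bΩ_a = 0` for all `a, b`. -/
def IsFlat {r n : ℕ} (Ω : Fin r → Matrix (Fin n) (Fin n) (AA r)) : Prop :=
  ∀ a b, hbarA r • (thetaMat a (Ω b) - thetaMat b (Ω a)) + (Ω a * Ω b - Ω b * Ω a) = 0

/-- `(S₊, S₋)` is a Birkhoff factorization of `S`:
`S = S₊·S₋` with `S₊ ∈ Mat_n(ℂ[ħ][[q]])`, `S₋ ∈ Mat_n(ℂ[[ħ⁻¹]][[q]])`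
and `S₋ ≡ Id` modulo `ħ⁻¹` (the coefficient of `ħ^0` in `S₋` is the
identity matrix over `ℂ[[q]]`). -/
def IsBirkhoffFactorization {r n : ℕ} (S Sp Sm : Matrix (Fin n) (Fin n) (AA r)) : Prop :=
  MatPolyH Sp ∧ MatRegH Sm ∧
  (∀ i j d, (Sm i j d).coeff 0 =
    MvPowerSeries.coeff d ((1 : Matrix (Fin n) (Fin n) (MvPowerSeries (Fin r) ℂ)) i j)) ∧
  S = Sp * Sm


namespace BirkhoffAux

open Finset

/-! ### Laurent-series level helpers -/

/-- truncation to exponents `≤ 0` (the `ℂ[ħ]` part). -/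
def pPart (x : LS) : LS where
  coeff k := if k ≤ 0 then x.coeff k else 0
  isPWO_support' := x.isPWO_support'.mono (by
    intro k hk
    simp only [Function.mem_support] at hk ⊢
    intro h; apply hk; simp [h])

@[simp] lemma pPart_coeff (x : LS) (k : ℤ) :
    (pPart x).coeff k = if k ≤ 0 then x.coeff k else 0 := rfl

lemma isPolyH_pPart (x : LS) : isPolyH (pPart x) := by
  intro k hk; simp [pPart_coeff, not_le.mpr hk]

lemma split_zero (x : LS) (h1 : isPolyH x) (h2 : isRegH x) (h0 : x.coeff 0 = 0) : x = 0 := by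
  ext k
  rcases lt_trichotomy k 0 with h | h | h
  · simpa using h2 k h
  · simpa [h] using h0
  · simpa using h1 k h

lemma coeff_sum {α : Type*} (s : Finset α) (f : α → LS) (k : ℤ) :
    (∑ a ∈ s, f a).coeff k = ∑ a ∈ s, (f a).coeff k := by
  classical
  induction s using Finset.induction with
  | empty => simp
  | insert _ _ h ih => simp [Finset.sum_insert h, HahnSeries.coeff_add, ih]

lemma mul_coeff_eq (x y : LS) (m : ℤ)
    (h : ∀ a b : ℤ, a + b = m → a ≠ m → x.coeff a * y.coeff b = 0) :
    (x * y).coeff m = x.coeff m * y.coeff 0 := by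
  classical
  rw [HahnSeries.coeff_mul]
  by_cases hm : ((m, (0:ℤ)) : ℤ × ℤ) ∈
      Finset.antidiagonal x.isPWO_support y.isPWO_support m
  · refine Finset.sum_eq_single_of_mem _ hm ?_
    intro b hb hne
    rw [Finset.mem_addAntidiagonal] at hb
    by_cases hb1 : b.1 = m
    · exfalso; apply hne
      have : b.2 = 0 := by omega
      exact Prod.ext hb1 this
    · exact h b.1 b.2 hb.2.2 hb1
  · rw [Finset.sum_eq_zero, eq_comm]
    · rw [Finset.mem_addAntidiagonal] at hm
      push_neg at hm
      by_cases h1 : x.coeff m = 0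
      · simp [h1]
      by_cases h2 : y.coeff 0 = 0
      · simp [h2]
      exact absurd (by simp) (hm h1 h2)
    · intro b hb
      have hb' := hb
      rw [Finset.mem_addAntidiagonal] at hb
      by_cases hb1 : b.1 = m
      · exfalso
        have h2 : b.2 = 0 := by omega
        have : b = (m, 0) := Prod.ext hb1 h2
        rw [this] at hb'
        exact hm hb'
      · exact h b.1 b.2 hb.2.2 hb1

lemma one_mat_coeff {n : ℕ} (i j : Fin n) (m : ℤ) :
    ((1 : Matrix (Fin n) (Fin n) LS) i j).coeff m
      = if i = j ∧ m = 0 then 1 else 0 := by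
  rcases eq_or_ne i j with h | h
  · simp [h, Matrix.one_apply, HahnSeries.coeff_one]
  · simp [Matrix.one_apply_ne h, h]

/-! ### the `q = 0` statement -/

lemma base {n : ℕ} (A B : Matrix (Fin n) (Fin n) LS)
    (hA : ∀ i j, isPolyH (A i j)) (hB : ∀ i j, isRegH (B i j))
    (hB0 : ∀ i j, (B i j).coeff 0 = if i = j then 1 else 0)
    (hAB : A * B = 1) : A = 1 ∧ B = 1 := by
  classical
  have hABc : ∀ (i j : Fin n) (m : ℤ),
      (∑ k, ((A i k * B k j).coeff m)) = if i = j ∧ m = 0 then 1 else 0 := by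
    intro i j m
    rw [← coeff_sum, ← one_mat_coeff i j m]
    congr 1
    rw [← hAB, Matrix.mul_apply]
  have hTneg : ∀ (k : ℤ), k < 0 → ∀ i j, (A i j).coeff k = 0 := by
    by_contra hcon
    push_neg at hcon
    set T : Set ℤ := {k | k < 0 ∧ ∃ i j, (A i j).coeff k ≠ 0} with hTdef
    have hne : T.Nonempty := by
      obtain ⟨k, hk, i, j, h⟩ := hcon
      exact ⟨k, hk, i, j, h⟩
    have hWF : T.IsWF := by
      have hU : (Finset.univ.sup (fun p : Fin n × Fin n => (A p.1 p.2).support)).IsWF := by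
        rw [Finset.isWF_sup]
        intro p _
        exact (A p.1 p.2).isPWO_support.isWF
      refine hU.mono ?_
      rintro k ⟨-, i, j, h⟩
      rw [Finset.sup_set_eq_biUnion]
      exact Set.mem_biUnion (Finset.mem_univ (i, j)) h
    set m := hWF.min hne with hmdef
    obtain ⟨hmneg, i0, j0, hm0⟩ := hWF.min_mem hne
    have key : ∀ i j, (A i j).coeff m = 0 := by
      intro i j
      have := hABc i j m
      rw [Finset.sum_congr rfl (fun k _ => mul_coeff_eq (A i k) (B k j) m ?_)] at this
      · simp only [hB0] at this
        rw [Finset.sum_congr rfl (fun k _ => by rw [mul_ite, mul_one, mul_zero])] at this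
        rw [Finset.sum_ite_eq' Finset.univ j (fun k => (A i k).coeff m)] at this
        simp only [Finset.mem_univ, if_true] at this
        rw [this]
        simp [show ¬ (i = j ∧ m = 0) from fun h => by omega]
      · intro a b hab hane
        by_cases hz : (A i k).coeff a = 0
        · rw [hz, zero_mul]
        have ha0 : a ≤ 0 := by
          by_contra h
          exact hz (hA i k a (by omega))
        rcases eq_or_lt_of_le ha0 with h0 | hneg
        · rw [hB k j b (by omega), mul_zero]
        · have haT : a ∈ T := ⟨hneg, i, k, hz⟩
          have := hWF.not_lt_min hne haT
          have : m < a := lt_of_le_of_ne (not_lt.mp this) (Ne.symm hane)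
          rw [hB k j b (by omega), mul_zero]
    exact hm0 (key i0 j0)
  have hA0 : ∀ i j, (A i j).coeff 0 = if i = j then 1 else 0 := by
    intro i j
    have := hABc i j 0
    rw [Finset.sum_congr rfl (fun k _ => mul_coeff_eq (A i k) (B k j) 0 ?_)] at this
    · simp only [hB0] at this
      rw [Finset.sum_congr rfl (fun k _ => by rw [mul_ite, mul_one, mul_zero])] at this
      rw [Finset.sum_ite_eq' Finset.univ j (fun k => (A i k).coeff 0)] at this
      simpa using this
    · intro a b hab hane
      rcases lt_trichotomy a 0 with h | h | h
      · rw [hTneg a h i k, zero_mul]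
      · omega
      · rw [hA i k a h, zero_mul]
  have hA1 : A = 1 := by
    ext i j k
    rw [one_mat_coeff]
    rcases lt_trichotomy k 0 with h | h | h
    · rw [hTneg k h i j]; simp [show ¬ (i = j ∧ k = 0) from fun hh => by omega]
    · subst h; rw [hA0 i j]; by_cases hij : i = j <;> simp [hij]
    · rw [hA i j k h]; simp [show ¬ (i = j ∧ k = 0) from fun hh => by omega]
  refine ⟨hA1, ?_⟩
  rw [hA1, one_mul] at hAB
  exact hAB

/-! ### degree on multi-indices -/

def degF {r : ℕ} (d : Fin r →₀ ℕ) : ℕ := d.sum fun _ v => v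

lemma degF_add {r : ℕ} (a b : Fin r →₀ ℕ) : degF (a + b) = degF a + degF b :=
  Finsupp.sum_add_index' (fun _ => rfl) (fun _ _ _ => rfl)

lemma degF_eq_zero {r : ℕ} {d : Fin r →₀ ℕ} : degF d = 0 ↔ d = 0 := by
  unfold degF
  rw [Finsupp.sum, Finset.sum_eq_zero_iff]
  constructor
  · intro h
    ext a
    by_cases ha : a ∈ d.support
    · exact h a ha
    · simpa using Finsupp.notMem_support_iff.mp ha
  · intro h; subst h; simp

/-! ### power-series level helpers -/

/-- the `q^d`-coefficient matrix -/
def coeffM {r n : ℕ} (X : Matrix (Fin n) (Fin n) (AA r)) (d : Fin r →₀ ℕ) :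
    Matrix (Fin n) (Fin n) LS :=
  Matrix.of fun i j => MvPowerSeries.coeff d (X i j)

lemma coeffM_mul {r n : ℕ} (X Y : Matrix (Fin n) (Fin n) (AA r)) (d : Fin r →₀ ℕ) :
    coeffM (X * Y) d = ∑ p ∈ Finset.HasAntidiagonal.antidiagonal d, coeffM X p.1 * coeffM Y p.2 := by
  refine Matrix.ext fun i j => ?_
  calc MvPowerSeries.coeff d ((X * Y) i j)
      = MvPowerSeries.coeff d (∑ k, X i k * Y k j) := by rw [Matrix.mul_apply]
    _ = ∑ k, MvPowerSeries.coeff d (X i k * Y k j) := map_sum _ _ _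
    _ = ∑ k, ∑ p ∈ Finset.HasAntidiagonal.antidiagonal d,
          MvPowerSeries.coeff p.1 (X i k) * MvPowerSeries.coeff p.2 (Y k j) := by
        simp [MvPowerSeries.coeff_mul]
    _ = ∑ p ∈ Finset.HasAntidiagonal.antidiagonal d, ∑ k,
          MvPowerSeries.coeff p.1 (X i k) * MvPowerSeries.coeff p.2 (Y k j) :=
        Finset.sum_comm
    _ = (∑ p ∈ Finset.HasAntidiagonal.antidiagonal d, coeffM X p.1 * coeffM Y p.2) i j := by
        rw [Matrix.sum_apply]
        exact Finset.sum_congr rfl fun p _ => by rw [Matrix.mul_apply]; rfl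

lemma one_eq_ite_coeff {r : ℕ} {n : ℕ} (i j : Fin n) (d : Fin r →₀ ℕ) :
    MvPowerSeries.coeff d ((1 : Matrix (Fin n) (Fin n) (MvPowerSeries (Fin r) ℂ)) i j)
      = if i = j ∧ d = 0 then 1 else 0 := by
  rcases eq_or_ne i j with h | h
  · simp [h, Matrix.one_apply, MvPowerSeries.coeff_one]
  · simp [Matrix.one_apply_ne h, h]

/-- `pPart` entrywise. -/
def pM {n : ℕ} (A : Matrix (Fin n) (Fin n) LS) : Matrix (Fin n) (Fin n) LS :=
  Matrix.of fun i j => pPart (A i j)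

/-- the index set of "middle" terms of the antidiagonal. -/
def E {r : ℕ} (d : Fin r →₀ ℕ) : Finset ((Fin r →₀ ℕ) × (Fin r →₀ ℕ)) :=
  ((Finset.HasAntidiagonal.antidiagonal d).erase (d, 0)).erase (0, d)

lemma degF_lt {r : ℕ} {d : Fin r →₀ ℕ} {p : (Fin r →₀ ℕ) × (Fin r →₀ ℕ)}
    (hp : p ∈ E d) : degF p.1 < degF d ∧ degF p.2 < degF d := by
  rw [E, Finset.mem_erase, Finset.mem_erase, Finset.HasAntidiagonal.mem_antidiagonal] at hp
  obtain ⟨hne1, hne2, hsum⟩ := hp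
  have hdeg : degF p.1 + degF p.2 = degF d := by rw [← degF_add, hsum]
  have h1 : p.1 ≠ 0 := by
    intro h
    exact hne1 (Prod.ext h (by rw [← hsum, h, zero_add]))
  have h2 : p.2 ≠ 0 := by
    intro h
    exact hne2 (Prod.ext (by rw [← hsum, h, add_zero]) h)
  have d1 : degF p.1 ≠ 0 := fun h => h1 (degF_eq_zero.mp h)
  have d2 : degF p.2 ≠ 0 := fun h => h2 (degF_eq_zero.mp h)
  omega

/-! ### the recursive construction -/

def BF {r n : ℕ} (S : Matrix (Fin n) (Fin n) (AA r)) :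
    (Fin r →₀ ℕ) → Matrix (Fin n) (Fin n) LS × Matrix (Fin n) (Fin n) LS
  | d =>
    if h : d = 0 then (1, 1)
    else
      let R := coeffM S d - ∑ p ∈ (E d).attach, (BF S p.1.1).1 * (BF S p.1.2).2
      (pM R, R - pM R)
  termination_by d => degF d
  decreasing_by
  · exact (degF_lt p.2).1
  · exact (degF_lt p.2).2

/-- the remainder term. -/
def Rm {r n : ℕ} (S : Matrix (Fin n) (Fin n) (AA r)) (d : Fin r →₀ ℕ) :
    Matrix (Fin n) (Fin n) LS :=
  coeffM S d - ∑ p ∈ (E d).attach, (BF S p.1.1).1 * (BF S p.1.2).2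

lemma BF_zero {r n : ℕ} (S : Matrix (Fin n) (Fin n) (AA r)) : BF S 0 = (1, 1) := by
  rw [BF]; simp

lemma BF_struct {r n : ℕ} (S : Matrix (Fin n) (Fin n) (AA r)) {d : Fin r →₀ ℕ} (h : d ≠ 0) :
    BF S d = (pM (Rm S d), Rm S d - pM (Rm S d)) := by
  rw [BF, dif_neg h]
  rfl

lemma Rm_eq {r n : ℕ} (S : Matrix (Fin n) (Fin n) (AA r)) (d : Fin r →₀ ℕ) :
    Rm S d = coeffM S d - ∑ p ∈ E d, (BF S p.1).1 * (BF S p.2).2 := by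
  rw [Rm, Finset.sum_attach (E d) (fun p => (BF S p.1).1 * (BF S p.2).2)]

lemma mem_ad1 {r : ℕ} (d : Fin r →₀ ℕ) :
    ((d, 0) : (Fin r →₀ ℕ) × (Fin r →₀ ℕ)) ∈ Finset.HasAntidiagonal.antidiagonal d := by
  rw [Finset.HasAntidiagonal.mem_antidiagonal]; simp

lemma mem_ad2 {r : ℕ} {d : Fin r →₀ ℕ} (h : d ≠ 0) :
    ((0, d) : (Fin r →₀ ℕ) × (Fin r →₀ ℕ)) ∈ (Finset.HasAntidiagonal.antidiagonal d).erase (d, 0) := by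
  rw [Finset.mem_erase, Finset.HasAntidiagonal.mem_antidiagonal]
  refine ⟨?_, by simp⟩
  intro hc
  have hfst := congrArg Prod.fst hc
  simp only [Prod.fst] at hfst
  exact h hfst.symm

lemma split_antidiagonal_sum {r : ℕ} {M : Type*} [AddCommMonoid M] {d : Fin r →₀ ℕ}
    (h : d ≠ 0) (f : (Fin r →₀ ℕ) × (Fin r →₀ ℕ) → M) :
    ∑ p ∈ Finset.HasAntidiagonal.antidiagonal d, f p = f (d, 0) + (f (0, d) + ∑ p ∈ E d, f p) := by
  rw [← Finset.add_sum_erase _ f (mem_ad1 d), ← Finset.add_sum_erase _ f (mem_ad2 h)]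
  rfl

lemma BF_sum {r n : ℕ} (S : Matrix (Fin n) (Fin n) (AA r)) (hS0 : coeffM S 0 = 1)
    (d : Fin r →₀ ℕ) :
    ∑ p ∈ Finset.HasAntidiagonal.antidiagonal d, (BF S p.1).1 * (BF S p.2).2 = coeffM S d := by
  rcases eq_or_ne d 0 with rfl | h
  · rw [Finsupp.antidiagonal_zero, Finset.sum_singleton, BF_zero, hS0]
    simp
  · rw [split_antidiagonal_sum h, BF_zero, BF_struct S h]
    simp only
    rw [mul_one, one_mul, Rm_eq]
    abel

/-! ### reading off per-degree data from a factorization -/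

lemma factor_coeff_sum {r n : ℕ} {S Sp Sm : Matrix (Fin n) (Fin n) (AA r)}
    (h4 : S = Sp * Sm) (d : Fin r →₀ ℕ) :
    ∑ p ∈ Finset.HasAntidiagonal.antidiagonal d, coeffM Sp p.1 * coeffM Sm p.2 = coeffM S d := by
  rw [h4, coeffM_mul]

lemma factor_zero {r n : ℕ} {S Sp Sm : Matrix (Fin n) (Fin n) (AA r)}
    (hBF : IsBirkhoffFactorization S Sp Sm) (hS0 : coeffM S 0 = 1) :
    coeffM Sp 0 = 1 ∧ coeffM Sm 0 = 1 := by
  obtain ⟨h1, h2, h3, h4⟩ := hBF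
  have hs := factor_coeff_sum h4 0
  rw [Finsupp.antidiagonal_zero, Finset.sum_singleton, hS0] at hs
  refine base _ _ (fun i j => h1 i j 0) (fun i j => h2 i j 0) (fun i j => ?_) hs
  have := h3 i j 0
  rw [one_eq_ite_coeff] at this
  show (Sm i j 0).coeff 0 = _
  simpa using this

lemma uniq {r n : ℕ} {S Sp Sm Sp' Sm' : Matrix (Fin n) (Fin n) (AA r)}
    (hS0 : coeffM S 0 = 1)
    (h : IsBirkhoffFactorization S Sp Sm) (h' : IsBirkhoffFactorization S Sp' Sm') :
    Sp = Sp' ∧ Sm = Sm' := by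
  obtain ⟨hz1, hz2⟩ := factor_zero h hS0
  obtain ⟨hz1', hz2'⟩ := factor_zero h' hS0
  obtain ⟨h1, h2, h3, h4⟩ := h
  obtain ⟨h1', h2', h3', h4'⟩ := h'
  have main : ∀ N : ℕ, ∀ d : Fin r →₀ ℕ, degF d ≤ N →
      coeffM Sp d = coeffM Sp' d ∧ coeffM Sm d = coeffM Sm' d := by
    intro N
    induction N with
    | zero =>
      intro d hd
      have : d = 0 := degF_eq_zero.mp (Nat.le_zero.mp hd)
      subst this
      rw [hz1, hz1', hz2, hz2']
      exact ⟨rfl, rfl⟩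
    | succ N ih =>
      intro d hd
      rcases eq_or_ne d 0 with rfl | hne
      · rw [hz1, hz1', hz2, hz2']
        exact ⟨rfl, rfl⟩
      have hs := factor_coeff_sum h4 d
      have hs' := factor_coeff_sum h4' d
      rw [split_antidiagonal_sum hne] at hs hs'
      simp only [hz1, hz2, hz1', hz2', one_mul, mul_one] at hs hs'
      have hmid : ∑ p ∈ E d, coeffM Sp p.1 * coeffM Sm p.2
          = ∑ p ∈ E d, coeffM Sp' p.1 * coeffM Sm' p.2 := by
        refine Finset.sum_congr rfl fun p hp => ?_
        have hlt := degF_lt hp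
        have e1 := ih p.1 (by omega)
        have e2 := ih p.2 (by omega)
        rw [e1.1, e2.2]
      rw [hmid] at hs
      rw [← hs'] at hs
      -- hs : Sp_d + (Sm_d + mid') = Sp'_d + (Sm'_d + mid')
      have hsum : coeffM Sp d + coeffM Sm d = coeffM Sp' d + coeffM Sm' d := by
        rw [← add_assoc, ← add_assoc] at hs
        exact add_right_cancel hs
      have hzero : coeffM Sp d - coeffM Sp' d = 0 := by
        refine Matrix.ext fun i j => ?_
        have hD : (coeffM Sp d - coeffM Sp' d) i j = (coeffM Sm' d - coeffM Sm d) i j := by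
          have : coeffM Sp d - coeffM Sp' d = coeffM Sm' d - coeffM Sm d := by
            rw [sub_eq_sub_iff_add_eq_add]
            rw [hsum]
            abel
          rw [this]
        refine split_zero _ ?_ ?_ ?_
        · intro k hk
          have e1 : (coeffM Sp d i j).coeff k = 0 := h1 i j d k hk
          have e2 : (coeffM Sp' d i j).coeff k = 0 := h1' i j d k hk
          rw [Matrix.sub_apply, HahnSeries.coeff_sub, e1, e2, sub_zero]
        · intro k hk
          have e1 : (coeffM Sm' d i j).coeff k = 0 := h2' i j d k hk
          have e2 : (coeffM Sm d i j).coeff k = 0 := h2 i j d k hk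
          rw [hD, Matrix.sub_apply, HahnSeries.coeff_sub, e1, e2, sub_zero]
        · have e1 : (coeffM Sm' d i j).coeff 0
              = MvPowerSeries.coeff d
                ((1 : Matrix (Fin n) (Fin n) (MvPowerSeries (Fin r) ℂ)) i j) := h3' i j d
          have e2 : (coeffM Sm d i j).coeff 0
              = MvPowerSeries.coeff d
                ((1 : Matrix (Fin n) (Fin n) (MvPowerSeries (Fin r) ℂ)) i j) := h3 i j d
          rw [hD, Matrix.sub_apply, HahnSeries.coeff_sub, e1, e2, sub_self]
      have hp : coeffM Sp d = coeffM Sp' d := by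
        have := sub_eq_zero.mp hzero
        exact this
      refine ⟨hp, ?_⟩
      have := hsum
      rw [hp] at this
      exact add_left_cancel this
  constructor
  · refine Matrix.ext fun i j => MvPowerSeries.ext fun d => ?_
    exact congrFun (congrFun (congrArg Matrix.of ((main (degF d) d le_rfl).1)) i) j
  · refine Matrix.ext fun i j => MvPowerSeries.ext fun d => ?_
    exact congrFun (congrFun (congrArg Matrix.of ((main (degF d) d le_rfl).2)) i) j

end BirkhoffAux

/-- **Formal Birkhoff factorization** (from the proof of Theorem 3.8).
Any `S ∈ Mat_n(ℂ[ħ,ħ⁻¹]][[q]])` with `S|_{q=0} = Id` factors uniquely as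
`S = S₊·S₋` with `S₊ ∈ Mat_n(ℂ[ħ][[q]])` and `S₋ ∈ Mat_n(ℂ[[ħ⁻¹]][[q]])`,
`S₋ ≡ Id (mod ħ⁻¹)`; moreover the factors automatically satisfy
`S₊|_{q=0} = Id` and `S₋|_{q=0} = Id`. -/
theorem birkhoff_factorization {r n : ℕ} (hr : 1 ≤ r) (hn : 1 ≤ n)
    (S : Matrix (Fin n) (Fin n) (AA r)) (hScc : S.map ccA = 1) :
    (∃! P : Matrix (Fin n) (Fin n) (AA r) × Matrix (Fin n) (Fin n) (AA r),
      IsBirkhoffFactorization S P.1 P.2) ∧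
    (∀ Sp Sm, IsBirkhoffFactorization S Sp Sm →
      Sp.map ccA = 1 ∧ Sm.map ccA = 1) := by
  classical
  have hS0 : BirkhoffAux.coeffM S 0 = 1 := by
    refine Matrix.ext fun i j => ?_
    have h := congrFun (congrFun hScc i) j
    rw [Matrix.map_apply] at h
    exact h
  set Sp : Matrix (Fin n) (Fin n) (AA r) :=
    Matrix.of (fun i j => (fun d => (BirkhoffAux.BF S d).1 i j : AA r)) with hSpdef
  set Sm : Matrix (Fin n) (Fin n) (AA r) :=
    Matrix.of (fun i j => (fun d => (BirkhoffAux.BF S d).2 i j : AA r)) with hSmdef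
  have hcSp : ∀ d, BirkhoffAux.coeffM Sp d = (BirkhoffAux.BF S d).1 := fun d => rfl
  have hcSm : ∀ d, BirkhoffAux.coeffM Sm d = (BirkhoffAux.BF S d).2 := fun d => rfl
  have hEx : IsBirkhoffFactorization S Sp Sm := by
    refine ⟨?_, ?_, ?_, ?_⟩
    · intro i j d
      show isPolyH ((BirkhoffAux.BF S d).1 i j)
      rcases eq_or_ne d 0 with rfl | hd
      · rw [BirkhoffAux.BF_zero]
        intro k hk
        rw [BirkhoffAux.one_mat_coeff]
        simp only [ite_eq_right_iff, and_imp]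
        intro _ hk0; omega
      · rw [BirkhoffAux.BF_struct S hd]
        exact BirkhoffAux.isPolyH_pPart _
    · intro i j d
      show isRegH ((BirkhoffAux.BF S d).2 i j)
      rcases eq_or_ne d 0 with rfl | hd
      · rw [BirkhoffAux.BF_zero]
        intro k hk
        rw [BirkhoffAux.one_mat_coeff]
        simp only [ite_eq_right_iff, and_imp]
        intro _ hk0; omega
      · rw [BirkhoffAux.BF_struct S hd]
        intro k hk
        show ((BirkhoffAux.Rm S d - BirkhoffAux.pM (BirkhoffAux.Rm S d)) i j).coeff k = 0
        rw [Matrix.sub_apply, HahnSeries.coeff_sub]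
        show _ - (BirkhoffAux.pPart _).coeff k = 0
        rw [BirkhoffAux.pPart_coeff, if_pos (le_of_lt hk), sub_self]
    · intro i j d
      show ((BirkhoffAux.BF S d).2 i j).coeff 0 = _
      rw [BirkhoffAux.one_eq_ite_coeff]
      rcases eq_or_ne d 0 with rfl | hd
      · rw [BirkhoffAux.BF_zero]
        rw [BirkhoffAux.one_mat_coeff]
        simp
      · rw [BirkhoffAux.BF_struct S hd]
        show ((BirkhoffAux.Rm S d - BirkhoffAux.pM (BirkhoffAux.Rm S d)) i j).coeff 0 = _
        rw [Matrix.sub_apply, HahnSeries.coeff_sub]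
        show _ - (BirkhoffAux.pPart _).coeff 0 = _
        rw [BirkhoffAux.pPart_coeff, if_pos le_rfl, sub_self]
        simp [hd]
    · refine Matrix.ext fun i j => MvPowerSeries.ext fun d => ?_
      have hmul := BirkhoffAux.coeffM_mul Sp Sm d
      have hsum := BirkhoffAux.BF_sum S hS0 d
      have hkey : BirkhoffAux.coeffM (Sp * Sm) d = BirkhoffAux.coeffM S d := by
        rw [hmul, ← hsum]
        exact Finset.sum_congr rfl fun p _ => by rw [hcSp, hcSm]
      exact (congrFun (congrFun hkey i) j).symm
  constructor
  · refine ⟨(Sp, Sm), hEx, ?_⟩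
    rintro ⟨Q1, Q2⟩ hQ
    obtain ⟨e1, e2⟩ := BirkhoffAux.uniq hS0 hQ hEx
    exact Prod.ext e1 e2
  · intro Sp' Sm' hF
    obtain ⟨z1, z2⟩ := BirkhoffAux.factor_zero hF hS0
    constructor
    · refine Matrix.ext fun i j => ?_
      rw [Matrix.map_apply]
      exact congrFun (congrFun z1 i) j
    · refine Matrix.ext fun i j => ?_
      rw [Matrix.map_apply]
      exact congrFun (congrFun z2 i) j
end
end

section
/- Let Ω_1, …, Ω_r ∈ Mat_n(ℂ[ħ][[q]]) be flat, i.e. ħ(θ_aΩ_b − θ_bΩ_a) + Ω_aΩ_b − Ω_bΩ_a = 0 for all a, b, and assume Ω_a|_{q=0} is independent of ħ for every a. Then there exists a unique Q ∈ Mat_n(ℂ[ħ][[q]]) with Q|_{q=0} = Id (hence Q is invertible over ℂ[ħ][[q]]) such that for every a the gauge-transformed connection matrix Ω̂_a := Q^{-1}·Ω_a·Q + ħ·Q^{-1}·θ_a Q has entries in ℂ[[q^1,…,q^r]], i.e. is independent of ħ. -/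
/-!
Work over ℂ.  We represent the coefficient ring `ℂ[ħ,ħ⁻¹]]` (formal Laurent
series `Σ_{k ≤ K} c_k ħ^k` with finitely many positive powers of `ħ`) as
`LaurentSeries ℂ` in the variable `t = ħ⁻¹`; thus the coefficient of `t^k`
is the coefficient of `ħ^{-k}`.  `AA r = ℂ[ħ,ħ⁻¹]][[q¹,…,qʳ]]`, and
`θ_a = qᵃ·∂/∂qᵃ` is the logarithmic partial derivative.
-/

noncomputable section

namespace CFp
open HahnSeries

lemma _root_.isConstH.isPolyH {x : LS} (h : isConstH x) : isPolyH x :=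
  fun k hk => h k (by omega)

lemma isPolyH_zero : isPolyH (0 : LS) := fun k _ => rfl
lemma isPolyH_one : isPolyH (1 : LS) := by
  intro k hk
  rw [← HahnSeries.single_zero_one, HahnSeries.coeff_single_of_ne (by omega)]

lemma isConstH_zero : isConstH (0 : LS) := fun k _ => rfl
lemma isConstH_one : isConstH (1 : LS) := by
  intro k hk
  rw [← HahnSeries.single_zero_one, HahnSeries.coeff_single_of_ne hk]

lemma _root_.isPolyH.add {x y : LS} (hx : isPolyH x) (hy : isPolyH y) : isPolyH (x + y) := by
  intro k hk; rw [HahnSeries.coeff_add, hx k hk, hy k hk, add_zero]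

lemma _root_.isConstH.add {x y : LS} (hx : isConstH x) (hy : isConstH y) : isConstH (x + y) := by
  intro k hk; rw [HahnSeries.coeff_add, hx k hk, hy k hk, add_zero]

lemma _root_.isPolyH.neg {x : LS} (hx : isPolyH x) : isPolyH (-x) := by
  intro k hk; rw [HahnSeries.coeff_neg, hx k hk, neg_zero]

lemma _root_.isConstH.neg {x : LS} (hx : isConstH x) : isConstH (-x) := by
  intro k hk; rw [HahnSeries.coeff_neg, hx k hk, neg_zero]

lemma _root_.isPolyH.sub {x y : LS} (hx : isPolyH x) (hy : isPolyH y) : isPolyH (x - y) := by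
  rw [sub_eq_add_neg]; exact hx.add hy.neg

lemma _root_.isConstH.sub {x y : LS} (hx : isConstH x) (hy : isConstH y) : isConstH (x - y) := by
  rw [sub_eq_add_neg]; exact hx.add hy.neg

lemma _root_.isPolyH.mul {x y : LS} (hx : isPolyH x) (hy : isPolyH y) : isPolyH (x * y) := by
  intro k hk
  rw [HahnSeries.coeff_mul]
  refine Finset.sum_eq_zero fun ij hij => ?_
  rw [Finset.mem_addAntidiagonal] at hij
  rcases lt_or_ge 0 ij.1 with h1 | h1
  · rw [hx _ h1, zero_mul]
  · rw [hy _ (by omega), mul_zero]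

lemma _root_.isConstH.mul {x y : LS} (hx : isConstH x) (hy : isConstH y) : isConstH (x * y) := by
  intro k hk
  rw [HahnSeries.coeff_mul]
  refine Finset.sum_eq_zero fun ij hij => ?_
  rw [Finset.mem_addAntidiagonal] at hij
  rcases eq_or_ne ij.1 0 with h1 | h1
  · rw [hy _ (by omega), mul_zero]
  · rw [hx _ h1, zero_mul]

lemma hbarL_mul_coeff (x : LS) (k : ℤ) : (hbarL * x).coeff k = x.coeff (k + 1) := by
  have := HahnSeries.coeff_single_mul_add (r := (1:ℂ)) (x := x) (a := k + 1) (b := (-1 : ℤ))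
  simpa [hbarL] using this

lemma _root_.isPolyH.hbar_mul {x : LS} (hx : isPolyH x) : isPolyH (hbarL * x) := by
  intro k hk; rw [hbarL_mul_coeff]; exact hx _ (by omega)

lemma isConstH_C (z : ℂ) : isConstH (HahnSeries.C z) := by
  intro k hk
  rw [HahnSeries.C_apply, HahnSeries.coeff_single_of_ne hk]

lemma _root_.isConstH.eq_C {x : LS} (hx : isConstH x) : x = HahnSeries.C (x.coeff 0) := by
  ext k
  rcases eq_or_ne k 0 with rfl | hk
  · rw [HahnSeries.C_apply, HahnSeries.coeff_single_same]
  · rw [hx k hk, HahnSeries.C_apply, HahnSeries.coeff_single_of_ne hk]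

lemma C_mul_coeff (z : ℂ) (x : LS) (k : ℤ) : (HahnSeries.C z * x).coeff k = z * x.coeff k := by
  have := HahnSeries.coeff_single_mul_add (r := z) (x := x) (a := k) (b := (0 : ℤ))
  simpa using this

lemma mul_C_coeff (z : ℂ) (x : LS) (k : ℤ) : (x * HahnSeries.C z).coeff k = x.coeff k * z := by
  have := HahnSeries.coeff_mul_single_add (r := z) (x := x) (a := k) (b := (0 : ℤ))
  simpa using this

lemma exists_bound_LS (x : LS) : ∃ N : ℕ, ∀ k : ℤ, k < -(N:ℤ) → x.coeff k = 0 := by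
  refine ⟨x.order.natAbs, fun k hk => ?_⟩
  exact HahnSeries.coeff_eq_zero_of_lt_order (by omega)

end CFp

lemma coeff_sum_LS {ι : Type*} (s : Finset ι) (f : ι → LS) (k : ℤ) :
    (∑ l ∈ s, f l).coeff k = ∑ l ∈ s, (f l).coeff k :=
  map_sum (HahnSeries.coeff.addMonoidHom k) f s

lemma isPolyH_sum {ι : Type*} (s : Finset ι) (f : ι → LS) (h : ∀ l ∈ s, isPolyH (f l)) :
    isPolyH (∑ l ∈ s, f l) := by
  intro k hk
  rw [coeff_sum_LS]
  exact Finset.sum_eq_zero fun l hl => h l hl k hk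

lemma isConstH_sum {ι : Type*} (s : Finset ι) (f : ι → LS) (h : ∀ l ∈ s, isConstH (f l)) :
    isConstH (∑ l ∈ s, f l) := by
  intro k hk
  rw [coeff_sum_LS]
  exact Finset.sum_eq_zero fun l hl => h l hl k hk



namespace CFp
open HahnSeries

variable {n : ℕ}

abbrev Mc (n : ℕ) := Matrix (Fin n) (Fin n) ℂ
abbrev ML (n : ℕ) := Matrix (Fin n) (Fin n) LS

/-- the `t^k`-coefficient of a matrix of Laurent series. -/
def hk (k : ℤ) (X : ML n) : Mc n := Matrix.of fun i j => (X i j).coeff k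

/-- embedding of constant matrices. -/
def emb (B : Mc n) : ML n := B.map (HahnSeries.C)

def PH (X : ML n) : Prop := ∀ i j, isPolyH (X i j)
def CH (X : ML n) : Prop := ∀ i j, isConstH (X i j)

lemma CH.toPH {X : ML n} (h : CH X) : PH X := fun i j => (h i j).isPolyH

@[simp] lemma hk_apply (k : ℤ) (X : ML n) (i j : Fin n) : hk k X i j = (X i j).coeff k := rfl

lemma hk_add (k : ℤ) (X Y : ML n) : hk k (X + Y) = hk k X + hk k Y := by
  ext i j; simp [hk]

lemma hk_sub (k : ℤ) (X Y : ML n) : hk k (X - Y) = hk k X - hk k Y := by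
  ext i j; simp [hk, HahnSeries.coeff_sub]

@[simp] lemma hk_zero (k : ℤ) : hk k (0 : ML n) = 0 := by
  ext i j; simp [hk]

lemma hk_sum {ι : Type*} (k : ℤ) (s : Finset ι) (f : ι → ML n) :
    hk k (∑ p ∈ s, f p) = ∑ p ∈ s, hk k (f p) := by
  classical
  induction s using Finset.induction with
  | empty => simp
  | insert _ _ hx ih => rw [Finset.sum_insert hx, Finset.sum_insert hx, hk_add, ih]

lemma hk_nsmul (k : ℤ) (m : ℕ) (X : ML n) : hk k (m • X) = m • hk k X := by
  ext i j
  simp only [hk_apply, Matrix.smul_apply, HahnSeries.coeff_nsmul, Pi.smul_apply]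

lemma hk_hbar_smul (k : ℤ) (X : ML n) : hk k (hbarL • X) = hk (k + 1) X := by
  ext i j
  simp only [hk_apply, Matrix.smul_apply, smul_eq_mul]
  exact hbarL_mul_coeff _ _

lemma hk_eq_zero_iff (X : ML n) : X = 0 ↔ ∀ k, hk k X = 0 := by
  constructor
  · rintro rfl k; simp
  · intro h
    ext i j k
    have := congrFun (congrFun (h k) i) j
    simpa [hk] using this

lemma PH_def (X : ML n) : PH X ↔ ∀ k : ℤ, 0 < k → hk k X = 0 := by
  constructor
  · intro h k hk; ext i j; exact h i j k hk
  · intro h i j k hkk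
    exact congrFun (congrFun (h k hkk) i) j

lemma CH_def (X : ML n) : CH X ↔ ∀ k : ℤ, k ≠ 0 → hk k X = 0 := by
  constructor
  · intro h k hk; ext i j; exact h i j k hk
  · intro h i j k hkk
    exact congrFun (congrFun (h k hkk) i) j

lemma PH_zero : PH (0 : ML n) := fun _ _ => isPolyH_zero
lemma CH_zero : CH (0 : ML n) := fun _ _ => isConstH_zero
lemma PH_one : PH (1 : ML n) := by
  intro i j
  rcases eq_or_ne i j with rfl | h
  · simpa [Matrix.one_apply] using isPolyH_one
  · simpa [Matrix.one_apply, h] using isPolyH_zero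
lemma CH_one : CH (1 : ML n) := by
  intro i j
  rcases eq_or_ne i j with rfl | h
  · simpa [Matrix.one_apply] using isConstH_one
  · simpa [Matrix.one_apply, h] using isConstH_zero

lemma PH.add {X Y : ML n} (hX : PH X) (hY : PH Y) : PH (X + Y) :=
  fun i j => (hX i j).add (hY i j)
lemma CH.add {X Y : ML n} (hX : CH X) (hY : CH Y) : CH (X + Y) :=
  fun i j => (hX i j).add (hY i j)
lemma PH.sub {X Y : ML n} (hX : PH X) (hY : PH Y) : PH (X - Y) :=
  fun i j => (hX i j).sub (hY i j)
lemma CH.sub {X Y : ML n} (hX : CH X) (hY : CH Y) : CH (X - Y) :=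
  fun i j => (hX i j).sub (hY i j)
lemma PH.mul {X Y : ML n} (hX : PH X) (hY : PH Y) : PH (X * Y) := by
  intro i j
  rw [Matrix.mul_apply]
  exact isPolyH_sum _ _ fun l _ => (hX i l).mul (hY l j)
lemma CH.mul {X Y : ML n} (hX : CH X) (hY : CH Y) : CH (X * Y) := by
  intro i j
  rw [Matrix.mul_apply]
  exact isConstH_sum _ _ fun l _ => (hX i l).mul (hY l j)
lemma PH.hbar_smul {X : ML n} (hX : PH X) : PH (hbarL • X) := by
  intro i j
  have := (hX i j).hbar_mul
  simpa [Matrix.smul_apply, smul_eq_mul] using this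
lemma PH.nsmul {X : ML n} (m : ℕ) (hX : PH X) : PH (m • X) := by
  intro i j k hkk
  simp only [Matrix.smul_apply, HahnSeries.coeff_nsmul, Pi.smul_apply, hX i j k hkk, smul_zero]
lemma PH.sum {ι : Type*} (s : Finset ι) (f : ι → ML n) (h : ∀ p ∈ s, PH (f p)) :
    PH (∑ p ∈ s, f p) := by
  classical
  induction s using Finset.induction with
  | empty => simpa using PH_zero
  | insert _ _ hx ih =>
    rw [Finset.sum_insert hx]
    exact (h _ (Finset.mem_insert_self _ _)).add (ih fun p hp => h p (Finset.mem_insert_of_mem hp))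
lemma CH.sum {ι : Type*} (s : Finset ι) (f : ι → ML n) (h : ∀ p ∈ s, CH (f p)) :
    CH (∑ p ∈ s, f p) := by
  classical
  induction s using Finset.induction with
  | empty => simpa using CH_zero
  | insert _ _ hx ih =>
    rw [Finset.sum_insert hx]
    exact (h _ (Finset.mem_insert_self _ _)).add (ih fun p hp => h p (Finset.mem_insert_of_mem hp))

lemma CH.eq_emb {X : ML n} (hX : CH X) : X = emb (hk 0 X) := by
  ext1 i j
  exact (hX i j).eq_C

lemma hk_emb (k : ℤ) (B : Mc n) : hk k (emb B) = if k = 0 then B else 0 := by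
  ext i j
  rcases eq_or_ne k 0 with rfl | h
  · simp [hk, emb, HahnSeries.C_apply, HahnSeries.coeff_single_same]
  · simp [hk, emb, HahnSeries.C_apply, HahnSeries.coeff_single_of_ne h, h]

lemma hk_emb_mul (k : ℤ) (B : Mc n) (X : ML n) : hk k (emb B * X) = B * hk k X := by
  ext i j
  simp only [hk_apply, Matrix.mul_apply, emb, Matrix.map_apply]
  rw [coeff_sum_LS]
  exact Finset.sum_congr rfl fun l _ => C_mul_coeff _ _ _

lemma hk_mul_emb (k : ℤ) (B : Mc n) (X : ML n) : hk k (X * emb B) = hk k X * B := by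
  ext i j
  simp only [hk_apply, Matrix.mul_apply, emb, Matrix.map_apply]
  rw [coeff_sum_LS]
  exact Finset.sum_congr rfl fun l _ => mul_C_coeff _ _ _

lemma exists_bound (X : ML n) : ∃ N : ℕ, ∀ k : ℤ, k < -(N:ℤ) → hk k X = 0 := by
  classical
  have h : ∀ p : Fin n × Fin n, ∃ N : ℕ, ∀ k : ℤ, k < -(N:ℤ) → (X p.1 p.2).coeff k = 0 :=
    fun p => exists_bound_LS _
  choose Nf hNf using h
  refine ⟨Finset.univ.sup Nf, fun k hk => ?_⟩
  ext i j
  have : Nf (i, j) ≤ Finset.univ.sup Nf := Finset.le_sup (Finset.mem_univ _)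
  simpa using hNf (i, j) k (by omega)

end CFp

namespace CFp
open HahnSeries

variable {n : ℕ}

lemma nsmul_eq_zero {m : ℕ} (hm : 0 < m) {Y : Mc n} (h : m • Y = 0) : Y = 0 := by
  have h2 : (m : ℂ) • Y = 0 := by rwa [Nat.cast_smul_eq_nsmul]
  rcases smul_eq_zero.mp h2 with h3 | h3
  · exact absurd h3 (by exact_mod_cast hm.ne')
  · exact h3

/-- Core uniqueness kernel lemma. -/
lemma K0 {m : ℕ} (hm : 0 < m) (A₀ : Mc n) (X : ML n) (hX : PH X)
    (h : ∀ k : ℤ, k ≤ -2 → m • hk (k+1) X + (A₀ * hk k X - hk k X * A₀) = 0) :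
    ∀ k : ℤ, k ≤ -1 → hk k X = 0 := by
  obtain ⟨N, hN⟩ := exists_bound X
  have H : ∀ i : ℕ, ∀ k : ℤ, k ≤ -1 → k + N + 1 ≤ i → hk k X = 0 := by
    intro i
    induction i with
    | zero => intro k _ hk2; exact hN k (by omega)
    | succ i ih =>
      intro k hk1 hk2
      rcases le_or_gt (k + N + 1) i with h'| h'
      · exact ih k hk1 h'
      · have hprev : hk (k - 1) X = 0 := ih (k - 1) (by omega) (by omega)
        have heq := h (k - 1) (by omega)
        rw [sub_add_cancel, hprev, mul_zero, zero_mul, sub_zero, add_zero] at heq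
        exact nsmul_eq_zero hm heq
  intro k hk1
  exact H (k + N + 1).toNat k hk1 (by omega)

lemma hk_const_mul (k : ℤ) {A : ML n} (hA : CH A) (X : ML n) :
    hk k (A * X) = hk 0 A * hk k X := by
  conv_lhs => rw [hA.eq_emb]
  rw [hk_emb_mul]

lemma hk_mul_const (k : ℤ) {A : ML n} (hA : CH A) (X : ML n) :
    hk k (X * A) = hk k X * hk 0 A := by
  conv_lhs => rw [hA.eq_emb]
  rw [hk_mul_emb]

/-- coefficient of the basic operator. -/
lemma hk_op (m : ℕ) {A : ML n} (hA : CH A) (X : ML n) (k : ℤ) :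
    hk k (hbarL • (m • X) + (A * X - X * A)) =
      m • hk (k+1) X + (hk 0 A * hk k X - hk k X * hk 0 A) := by
  rw [hk_add, hk_hbar_smul, hk_nsmul, hk_sub, hk_const_mul k hA, hk_mul_const k hA]

/-- choice of a coefficient bound. -/
def SB (S : ML n) : ℕ := (exists_bound S).choose

lemma SB_spec (S : ML n) : ∀ k : ℤ, k < -(SB S : ℤ) → hk k S = 0 :=
  (exists_bound S).choose_spec

/-- downward solution coefficients. -/
def phiAux (m : ℕ) (A₀ : Mc n) (S : ML n) : ℕ → Mc n
  | 0 => 0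
  | (l+1) => (-(m:ℂ)⁻¹) • ((A₀ * phiAux m A₀ S l - phiAux m A₀ S l * A₀)
      + hk ((l:ℤ) - (SB S + 1)) S)

def cPhi (m : ℕ) (A₀ : Mc n) (S : ML n) (i : ℕ) : Mc n := phiAux m A₀ S (SB S + 1 - i)

/-- the solution. -/
def Phi (m : ℕ) (A₀ : Mc n) (S : ML n) : ML n :=
  ∑ i ∈ Finset.range (SB S + 1), (hbarL ^ i) • emb (cPhi m A₀ S i)

lemma hk_hbarpow_smul_emb (i : ℕ) (B : Mc n) (k : ℤ) :
    hk k ((hbarL ^ i) • emb B) = if k = -(i:ℤ) then B else 0 := by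
  have hpow : (hbarL : LS) ^ i = HahnSeries.single (-(i:ℤ)) 1 := by
    rw [hbarL, HahnSeries.single_pow, one_pow]
    congr 1
    simp [nsmul_eq_mul]
  ext i' j'
  simp only [hk_apply, Matrix.smul_apply, smul_eq_mul, emb, Matrix.map_apply, hpow,
    HahnSeries.C_apply, HahnSeries.single_mul_single, add_zero, one_mul]
  rw [HahnSeries.coeff_single]
  split <;> simp [*]

lemma hk_Phi (m : ℕ) (A₀ : Mc n) (S : ML n) (i : ℕ) :
    hk (-(i:ℤ)) (Phi m A₀ S) = cPhi m A₀ S i := by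
  rw [Phi, hk_sum]
  rcases lt_or_ge i (SB S + 1) with h | h
  · rw [Finset.sum_eq_single i]
    · rw [hk_hbarpow_smul_emb, if_pos rfl]
    · intro b _ hb
      rw [hk_hbarpow_smul_emb, if_neg (by omega)]
    · intro hmem; exact absurd (Finset.mem_range.mpr h) hmem
  · rw [Finset.sum_eq_zero, cPhi, Nat.sub_eq_zero_of_le (by omega), phiAux]
    intro b hb
    rw [Finset.mem_range] at hb
    rw [hk_hbarpow_smul_emb, if_neg (by omega)]

lemma hk_Phi_pos (m : ℕ) (A₀ : Mc n) (S : ML n) (k : ℤ) (hkpos : 0 < k) :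
    hk k (Phi m A₀ S) = 0 := by
  rw [Phi, hk_sum]
  refine Finset.sum_eq_zero fun b _ => ?_
  rw [hk_hbarpow_smul_emb, if_neg (by omega)]

lemma Phi_PH (m : ℕ) (A₀ : Mc n) (S : ML n) : PH (Phi m A₀ S) :=
  (PH_def _).mpr fun k hkpos => hk_Phi_pos m A₀ S k hkpos

lemma nsmul_inv_smul {m : ℕ} (hm : 0 < m) (V : Mc n) :
    m • ((-(m:ℂ)⁻¹) • V) = -V := by
  rw [← Nat.cast_smul_eq_nsmul ℂ, smul_smul, mul_neg, mul_inv_cancel₀ (by exact_mod_cast hm.ne'),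
    neg_one_smul]

/-- Key existence lemma. -/
lemma K1 {m : ℕ} (hm : 0 < m) (A₀ : Mc n) (S : ML n) :
    ∀ k : ℤ, k ≤ -1 →
      m • hk (k+1) (Phi m A₀ S) +
        (A₀ * hk k (Phi m A₀ S) - hk k (Phi m A₀ S) * A₀) + hk k S = 0 := by
  intro k hk1
  set X := Phi m A₀ S with hXdef
  obtain ⟨i, hi, rfl⟩ : ∃ i : ℕ, 1 ≤ i ∧ k = -(i:ℤ) :=
    ⟨(-k).toNat, by omega, by omega⟩
  have e1 : (-(i:ℤ)) + 1 = -((i-1 : ℕ) : ℤ) := by omega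
  rw [e1, hk_Phi, hk_Phi]
  rcases le_or_gt i (SB S + 1) with hile | higt
  · have e2 : SB S + 1 - (i - 1) = (SB S + 1 - i) + 1 := by omega
    rw [cPhi, e2, phiAux]
    have e3 : ((SB S + 1 - i : ℕ) : ℤ) - ((SB S : ℕ) + 1) = -(i:ℤ) := by omega
    rw [e3, nsmul_inv_smul hm, cPhi]
    abel
  · have e4 : cPhi m A₀ S (i-1) = 0 := by
      rw [cPhi, Nat.sub_eq_zero_of_le (by omega), phiAux]
    have e5 : cPhi m A₀ S i = 0 := by
      rw [cPhi, Nat.sub_eq_zero_of_le (by omega), phiAux]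
    rw [e4, e5, SB_spec S _ (by omega)]
    simp

end CFp


namespace CFp
open HahnSeries

variable {r n : ℕ}

abbrev Idx (r : ℕ) := Fin r →₀ ℕ
abbrev MA (r n : ℕ) := Matrix (Fin n) (Fin n) (AA r)

/-- `q^d` coefficient of a matrix over `AA r`. -/
def cd (M : MA r n) (d : Idx r) : ML n := Matrix.of fun i j => M i j d

@[simp] lemma cd_apply (M : MA r n) (d : Idx r) (i j : Fin n) : cd M d i j = M i j d := rfl

/-- build a matrix over `AA r` from its `q`-coefficients. -/
def ofC (f : Idx r → ML n) : MA r n := Matrix.of fun i j => fun d => f d i j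

@[simp] lemma cd_ofC (f : Idx r → ML n) (d : Idx r) : cd (ofC f) d = f d := rfl

lemma cd_ext {M N : MA r n} (h : ∀ d, cd M d = cd N d) : M = N := by
  apply Matrix.ext
  intro i j
  funext d
  exact congrFun (congrFun (h d) i) j

lemma cd_add (M N : MA r n) (d : Idx r) : cd (M + N) d = cd M d + cd N d := rfl
lemma cd_sub (M N : MA r n) (d : Idx r) : cd (M - N) d = cd M d - cd N d := rfl
@[simp] lemma cd_zero (d : Idx r) : cd (0 : MA r n) d = 0 := rfl

lemma coeff_eq_apply (x : AA r) (d : Idx r) : x d = MvPowerSeries.coeff d x := rfl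

lemma cd_one (d : Idx r) : cd (1 : MA r n) d = if d = 0 then 1 else 0 := by
  apply Matrix.ext
  intro i j
  show MvPowerSeries.coeff d ((1 : MA r n) i j) = _
  rcases eq_or_ne i j with rfl | hij
  · rw [Matrix.one_apply_eq, MvPowerSeries.coeff_one]
    split_ifs with h
    · exact (Matrix.one_apply_eq i).symm
    · rfl
  · rw [Matrix.one_apply_ne hij, map_zero]
    split_ifs with h
    · exact (Matrix.one_apply_ne hij).symm
    · rfl

lemma cd_mul (M N : MA r n) (d : Idx r) :
    cd (M * N) d = ∑ p ∈ Finset.HasAntidiagonal.antidiagonal d, cd M p.1 * cd N p.2 := by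
  classical
  apply Matrix.ext
  intro i j
  show MvPowerSeries.coeff d ((M * N) i j) = _
  rw [Matrix.mul_apply, map_sum]
  calc ∑ l, MvPowerSeries.coeff d (M i l * N l j)
      = ∑ l, ∑ p ∈ Finset.HasAntidiagonal.antidiagonal d,
          MvPowerSeries.coeff p.1 (M i l) * MvPowerSeries.coeff p.2 (N l j) := by
        refine Finset.sum_congr rfl fun l _ => ?_
        rw [MvPowerSeries.coeff_mul]
    _ = ∑ p ∈ Finset.HasAntidiagonal.antidiagonal d, ∑ l,
          MvPowerSeries.coeff p.1 (M i l) * MvPowerSeries.coeff p.2 (N l j) :=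
        Finset.sum_comm
    _ = ∑ p ∈ Finset.HasAntidiagonal.antidiagonal d, (cd M p.1 * cd N p.2) i j := by
        refine Finset.sum_congr rfl fun p _ => ?_
        rw [Matrix.mul_apply]
        rfl
    _ = (∑ p ∈ Finset.HasAntidiagonal.antidiagonal d, cd M p.1 * cd N p.2) i j := by
        rw [Matrix.sum_apply]

lemma cd_hbar_smul (M : MA r n) (d : Idx r) : cd (hbarA r • M) d = hbarL • cd M d := by
  apply Matrix.ext
  intro i j
  show MvPowerSeries.coeff d ((hbarA r • M) i j) = _
  rw [Matrix.smul_apply, smul_eq_mul, hbarA, MvPowerSeries.coeff_C_mul,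
    Matrix.smul_apply, smul_eq_mul]
  rfl

lemma cd_theta (a : Fin r) (M : MA r n) (d : Idx r) :
    cd (thetaMat a M) d = (d a) • cd M d := by
  apply Matrix.ext
  intro i j
  simp only [cd_apply, thetaMat, Matrix.of_apply, thetaA, Matrix.smul_apply]
  rw [nsmul_eq_mul]

/-- total degree. -/
def wt (d : Idx r) : ℕ := d.sum fun _ k => k

lemma wt_add (d e : Idx r) : wt (d + e) = wt d + wt e :=
  Finsupp.sum_add_index' (fun _ => rfl) (fun _ _ _ => rfl)

lemma wt_eq_zero {d : Idx r} : wt d = 0 ↔ d = 0 := by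
  constructor
  · intro h
    ext a
    rw [wt, Finsupp.sum] at h
    rcases Finset.sum_eq_zero_iff.mp h with hz
    rcases eq_or_ne (d a) 0 with h0 | h0
    · exact h0
    · exact hz a (Finsupp.mem_support_iff.mpr h0)
  · rintro rfl; rfl

lemma sum_antidiagonal_split {G : Type*} [AddCommMonoid G] {d : Idx r} (hd : d ≠ 0)
    (F : Idx r × Idx r → G) :
    ∑ p ∈ Finset.HasAntidiagonal.antidiagonal d, F p
      = F (0, d) + F (d, 0)
        + ∑ p ∈ (Finset.HasAntidiagonal.antidiagonal d).filter (fun p => p.1 ≠ 0 ∧ p.2 ≠ 0), F p := by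
  classical
  have key : Finset.HasAntidiagonal.antidiagonal d =
      insert ((0 : Idx r), d) (insert (d, (0 : Idx r))
        ((Finset.HasAntidiagonal.antidiagonal d).filter (fun p => p.1 ≠ 0 ∧ p.2 ≠ 0))) := by
    ext p
    simp only [Finset.mem_insert, Finset.mem_filter, Finset.HasAntidiagonal.mem_antidiagonal]
    constructor
    · intro hp
      rcases eq_or_ne p.1 0 with h1 | h1
      · left
        rw [Prod.ext_iff]
        refine ⟨h1, ?_⟩
        rw [h1, zero_add] at hp
        exact hp
      · rcases eq_or_ne p.2 0 with h2 | h2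
        · right; left
          rw [Prod.ext_iff]
          refine ⟨?_, h2⟩
          rw [h2, add_zero] at hp
          exact hp
        · right; right; exact ⟨hp, h1, h2⟩
    · rintro (h | h | ⟨hp, _, _⟩)
      · rw [h]; simp
      · rw [h]; simp
      · exact hp
  have h2 : (d, (0 : Idx r)) ∉
      (Finset.HasAntidiagonal.antidiagonal d).filter (fun p => p.1 ≠ 0 ∧ p.2 ≠ 0) := by
    intro hmem
    rw [Finset.mem_filter] at hmem
    exact hmem.2.2 rfl
  have h1 : ((0 : Idx r), d) ∉ insert (d, (0 : Idx r))
      ((Finset.HasAntidiagonal.antidiagonal d).filter (fun p => p.1 ≠ 0 ∧ p.2 ≠ 0)) := by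
    intro hmem
    rcases Finset.mem_insert.mp hmem with h | h
    · exact hd ((Prod.ext_iff.mp h).1).symm
    · exact ((Finset.mem_filter.mp h).2).1 rfl
  conv_lhs => rw [key]
  rw [Finset.sum_insert h1, Finset.sum_insert h2, add_assoc]

lemma mid_mem {d : Idx r} {p : Idx r × Idx r}
    (hp : p ∈ (Finset.HasAntidiagonal.antidiagonal d).filter (fun p => p.1 ≠ 0 ∧ p.2 ≠ 0)) :
    p.1 + p.2 = d ∧ wt p.1 < wt d ∧ wt p.2 < wt d := by
  rw [Finset.mem_filter, Finset.HasAntidiagonal.mem_antidiagonal] at hp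
  obtain ⟨hsum, h1, h2⟩ := hp
  have hw : wt p.1 + wt p.2 = wt d := by rw [← hsum, wt_add]
  have hw1 : wt p.1 ≠ 0 := fun h => h1 (wt_eq_zero.mp h)
  have hw2 : wt p.2 ≠ 0 := fun h => h2 (wt_eq_zero.mp h)
  exact ⟨hsum, by omega, by omega⟩

end CFp

namespace CFp
open HahnSeries

variable {r n : ℕ}

lemma exd (d : Idx r) (hd : d ≠ 0) : ∃ a, d a ≠ 0 := by
  by_contra h
  push_neg at h
  exact hd (Finsupp.ext h)

/-- pick an index where `d` is nonzero. -/
def pick (d : Idx r) (hd : d ≠ 0) : Fin r := (exd d hd).choose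

lemma pick_spec (d : Idx r) (hd : d ≠ 0) : d (pick d hd) ≠ 0 := (exd d hd).choose_spec

/-- middle part of the antidiagonal. -/
def mid (d : Idx r) : Finset (Idx r × Idx r) :=
  (Finset.HasAntidiagonal.antidiagonal d).filter (fun p => p.1 ≠ 0 ∧ p.2 ≠ 0)

variable (W : Fin r → Idx r → ML n)

def stepS (prev : Idx r → ML n × (Fin r → ML n)) (b : Fin r) (d : Idx r) : ML n :=
  W b d + ∑ p ∈ mid d, (W b p.1 * (prev p.2).1 - (prev p.1).1 * ((prev p.2).2 b))

def stepQ (prev : Idx r → ML n × (Fin r → ML n)) (d : Idx r) (hd : d ≠ 0) : ML n :=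
  Phi (d (pick d hd)) (hk 0 (W (pick d hd) 0)) (stepS W prev (pick d hd) d)

def step (prev : Idx r → ML n × (Fin r → ML n)) (d : Idx r) : ML n × (Fin r → ML n) :=
  if hd : d = 0 then (1, fun b => W b 0)
  else (stepQ W prev d hd,
    fun b => hbarL • ((d b) • stepQ W prev d hd)
      + (W b 0 * stepQ W prev d hd - stepQ W prev d hd * W b 0) + stepS W prev b d)

def T : ℕ → Idx r → ML n × (Fin r → ML n)
  | 0 => fun d => step W (fun _ => (0, fun _ => 0)) d
  | (N+1) => fun d => if wt d < N then T N d else step W (T N) d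

lemma T_stable : ∀ N d, wt d < N → T W N d = T W (wt d + 1) d := by
  intro N
  induction N with
  | zero => intro d h; omega
  | succ N ih =>
    intro d h
    rcases lt_or_ge (wt d) N with h' | h'
    · have e1 : T W (N+1) d = T W N d := by
        show (if wt d < N then T W N d else step W (T W N) d) = T W N d
        rw [if_pos h']
      rw [e1, ih d h']
    · have e2 : wt d = N := by omega
      subst e2
      rfl

def Qc (d : Idx r) : ML n := (T W (wt d + 1) d).1
def Pc (b : Fin r) (d : Idx r) : ML n := (T W (wt d + 1) d).2 b

lemma T_succ_eq_step (d : Idx r) : T W (wt d + 1) d = step W (T W (wt d)) d := by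
  show (if wt d < wt d then _ else _) = _
  rw [if_neg (lt_irrefl _)]

@[simp] lemma Qc_zero : Qc W 0 = 1 := by
  rw [Qc, T_succ_eq_step, step, dif_pos rfl]

@[simp] lemma Pc_zero (b : Fin r) : Pc W b 0 = W b 0 := by
  rw [Pc, T_succ_eq_step, step, dif_pos rfl]

/-- the inhomogeneous term. -/
def Sb (b : Fin r) (d : Idx r) : ML n :=
  W b d + ∑ p ∈ mid d, (W b p.1 * Qc W p.2 - Qc W p.1 * Pc W b p.2)

lemma stepS_eq {d : Idx r} (hd : d ≠ 0) (b : Fin r) :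
    stepS W (T W (wt d)) b d = Sb W b d := by
  rw [stepS, Sb]
  congr 1
  refine Finset.sum_congr rfl fun p hp => ?_
  obtain ⟨hsum, h1, h2⟩ := mid_mem hp
  rw [T_stable W (wt d) p.2 h2, T_stable W (wt d) p.1 h1]
  rfl

lemma Qc_eq {d : Idx r} (hd : d ≠ 0) :
    Qc W d = Phi (d (pick d hd)) (hk 0 (W (pick d hd) 0)) (Sb W (pick d hd) d) := by
  rw [Qc, T_succ_eq_step, step, dif_neg hd]
  show stepQ W (T W (wt d)) d hd = _
  rw [stepQ, stepS_eq W hd]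

lemma Pc_eq {d : Idx r} (hd : d ≠ 0) (b : Fin r) :
    Pc W b d = hbarL • ((d b) • Qc W d)
      + (W b 0 * Qc W d - Qc W d * W b 0) + Sb W b d := by
  rw [Pc, T_succ_eq_step, step, dif_neg hd]
  show hbarL • ((d b) • stepQ W (T W (wt d)) d hd)
      + (W b 0 * stepQ W (T W (wt d)) d hd - stepQ W (T W (wt d)) d hd * W b 0)
      + stepS W (T W (wt d)) b d = _
  rw [stepS_eq W hd]
  have hQ : stepQ W (T W (wt d)) d hd = Qc W d := by
    rw [Qc, T_succ_eq_step, step, dif_neg hd]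
  rw [hQ]

lemma Qc_PH (hW : ∀ b d, PH (W b d)) : ∀ d, PH (Qc W d) := by
  intro d
  rcases eq_or_ne d 0 with rfl | hd
  · rw [Qc_zero]; exact PH_one
  · rw [Qc_eq W hd]; exact Phi_PH _ _ _

lemma Pc_PH (hW : ∀ b d, PH (W b d)) : ∀ d b, PH (Pc W b d) := by
  have main : ∀ N d, wt d ≤ N → ∀ b, PH (Pc W b d) := by
    intro N
    induction N with
    | zero =>
      intro d h b
      have : d = 0 := wt_eq_zero.mp (by omega)
      subst this
      rw [Pc_zero]; exact hW b 0
    | succ N ih =>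
      intro d h b
      rcases le_or_gt (wt d) N with h' | h'
      · exact ih d h' b
      · have hd : d ≠ 0 := by
          intro h0; subst h0; rw [show wt (0 : Idx r) = 0 from rfl] at h'; omega
        rw [Pc_eq W hd]
        have hSb : PH (Sb W b d) := by
          refine (hW b d).add (PH.sum _ _ fun p hp => ?_)
          obtain ⟨hsum, h1, h2⟩ := mid_mem hp
          exact ((hW b p.1).mul (Qc_PH W hW p.2)).sub
            ((Qc_PH W hW p.1).mul (ih p.2 (by omega) b))
        exact ((PH.hbar_smul (PH.nsmul _ (Qc_PH W hW d))).add
          (((hW b 0).mul (Qc_PH W hW d)).sub ((Qc_PH W hW d).mul (hW b 0)))).add hSb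
  exact fun d b => main (wt d) d le_rfl b

lemma Sb_PH (hW : ∀ b d, PH (W b d)) : ∀ b d, PH (Sb W b d) := by
  intro b d
  refine (hW b d).add (PH.sum _ _ fun p hp => ?_)
  obtain ⟨hsum, h1, h2⟩ := mid_mem hp
  exact ((hW b p.1).mul (Qc_PH W hW p.2)).sub
    ((Qc_PH W hW p.1).mul (Pc_PH W hW p.2 b))

/-- the `P` at the chosen index is independent of `ħ`. -/
lemma Pc_pick_CH (hW : ∀ b d, PH (W b d)) (hW0 : ∀ b, CH (W b 0))
    {d : Idx r} (hd : d ≠ 0) : CH (Pc W (pick d hd) d) := by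
  set a := pick d hd
  rw [CH_def]
  intro k hk0
  rcases lt_or_ge 0 k with hpos | hneg
  · exact (PH_def _).mp (fun i j => Pc_PH W hW d a i j) k hpos
  · have hkle : k ≤ -1 := by omega
    rw [Pc_eq W hd a, hk_add, hk_add, hk_hbar_smul, hk_nsmul, hk_sub,
      hk_const_mul k (hW0 a), hk_mul_const k (hW0 a)]
    rw [Qc_eq W hd]
    exact K1 (Nat.pos_of_ne_zero (pick_spec d hd)) _ _ k hkle

/-- the master coefficient equation. -/
lemma E2 (b : Fin r) (d : Idx r) :
    ∑ p ∈ Finset.HasAntidiagonal.antidiagonal d, Qc W p.1 * Pc W b p.2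
      = ∑ p ∈ Finset.HasAntidiagonal.antidiagonal d, W b p.1 * Qc W p.2 + hbarL • ((d b) • Qc W d) := by
  rcases eq_or_ne d 0 with rfl | hd
  · rw [Finsupp.antidiagonal_zero, Finset.sum_singleton, Finset.sum_singleton]
    show Qc W 0 * Pc W b 0 = W b 0 * Qc W 0 + hbarL • (((0 : Idx r) b) • Qc W 0)
    rw [Qc_zero, Pc_zero, one_mul, mul_one]
    rw [show ((0 : Idx r) b) = 0 from rfl, zero_nsmul,
      show hbarL • (0 : ML n) = 0 by ext i j; simp, add_zero]
  · rw [sum_antidiagonal_split hd, sum_antidiagonal_split hd]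
    show Qc W 0 * Pc W b d + Qc W d * Pc W b 0 + ∑ p ∈ mid d, Qc W p.1 * Pc W b p.2
      = W b 0 * Qc W d + W b d * Qc W 0 + ∑ p ∈ mid d, W b p.1 * Qc W p.2
        + hbarL • ((d b) • Qc W d)
    rw [Qc_zero, Pc_zero, one_mul, mul_one, Pc_eq W hd b, Sb]
    rw [Finset.sum_sub_distrib]
    abel

end CFp

namespace CFp
open HahnSeries

variable {r n : ℕ}

lemma thetaA_add (a : Fin r) (x y : AA r) : thetaA a (x + y) = thetaA a x + thetaA a y := by
  funext d
  show (d a : LS) * (x d + y d) = (d a : LS) * x d + (d a : LS) * y d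
  rw [mul_add]

lemma thetaA_sum {ι : Type*} (a : Fin r) (s : Finset ι) (f : ι → AA r) :
    thetaA a (∑ l ∈ s, f l) = ∑ l ∈ s, thetaA a (f l) := by
  classical
  induction s using Finset.induction with
  | empty =>
    funext d
    show (d a : LS) * ((0 : AA r) d) = (0 : AA r) d
    rw [show ((0:AA r) d) = 0 from rfl, mul_zero]
  | insert _ _ hx ih => rw [Finset.sum_insert hx, Finset.sum_insert hx, thetaA_add, ih]

lemma thetaA_mul (a : Fin r) (x y : AA r) :
    thetaA a (x * y) = thetaA a x * y + x * thetaA a y := by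
  classical
  funext d
  show (d a : LS) * ((x * y) d) = _
  have hL : ((x * y) d) = ∑ p ∈ Finset.HasAntidiagonal.antidiagonal d, x p.1 * y p.2 := by
    show MvPowerSeries.coeff d (x * y) = _
    rw [MvPowerSeries.coeff_mul]
    rfl
  have hR1 : ((thetaA a x * y) d) = ∑ p ∈ Finset.HasAntidiagonal.antidiagonal d,
      ((p.1 a : LS) * x p.1) * y p.2 := by
    show MvPowerSeries.coeff d (thetaA a x * y) = _
    rw [MvPowerSeries.coeff_mul]
    rfl
  have hR2 : ((x * thetaA a y) d) = ∑ p ∈ Finset.HasAntidiagonal.antidiagonal d,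
      x p.1 * ((p.2 a : LS) * y p.2) := by
    show MvPowerSeries.coeff d (x * thetaA a y) = _
    rw [MvPowerSeries.coeff_mul]
    rfl
  show (d a : LS) * ((x * y) d) = (thetaA a x * y) d + (x * thetaA a y) d
  rw [hL, hR1, hR2, Finset.mul_sum, ← Finset.sum_add_distrib]
  refine Finset.sum_congr rfl fun p hp => ?_
  have hd : p.1 + p.2 = d := Finset.HasAntidiagonal.mem_antidiagonal.mp hp
  have hda : d a = p.1 a + p.2 a := by rw [← hd]; rfl
  rw [hda]
  push_cast
  ring

lemma thetaA_comm (a b : Fin r) (x : AA r) :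
    thetaA a (thetaA b x) = thetaA b (thetaA a x) := by
  funext d
  show (d a : LS) * ((d b : LS) * x d) = (d b : LS) * ((d a : LS) * x d)
  ring

lemma thetaA_smul (a : Fin r) (c : LS) (x : AA r) :
    thetaA a ((MvPowerSeries.C : LS →+* AA r) c * x) = (MvPowerSeries.C : LS →+* AA r) c * thetaA a x := by
  funext d
  show (d a : LS) * (((MvPowerSeries.C : LS →+* AA r) c * x) d) = ((MvPowerSeries.C : LS →+* AA r) c * thetaA a x) d
  have h1 : (((MvPowerSeries.C : LS →+* AA r) c * x) d) = c * x d := by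
    show MvPowerSeries.coeff d ((MvPowerSeries.C : LS →+* AA r) c * x) = _
    rw [MvPowerSeries.coeff_C_mul]
    rfl
  have h2 : (((MvPowerSeries.C : LS →+* AA r) c * thetaA a x) d) = c * ((d a : LS) * x d) := by
    show MvPowerSeries.coeff d ((MvPowerSeries.C : LS →+* AA r) c * thetaA a x) = _
    rw [MvPowerSeries.coeff_C_mul]
    rfl
  rw [h1, h2]
  ring


lemma masmul_add (c : AA r) (M N : MA r n) : c • (M + N) = c • M + c • N := by
  apply Matrix.ext
  intro i j
  show c • (M i j + N i j) = c • M i j + c • N i j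
  rw [smul_eq_mul, smul_eq_mul, smul_eq_mul, mul_add]

lemma masmul_sub (c : AA r) (M N : MA r n) : c • (M - N) = c • M - c • N := by
  apply Matrix.ext
  intro i j
  show c • (M i j - N i j) = c • M i j - c • N i j
  rw [smul_eq_mul, smul_eq_mul, smul_eq_mul, mul_sub]

lemma masmul_mul (c : AA r) (M N : MA r n) : (c • M) * N = c • (M * N) := by
  apply Matrix.ext
  intro i j
  rw [Matrix.mul_apply]
  show _ = c • ((M * N) i j)
  rw [Matrix.mul_apply, smul_eq_mul, Finset.mul_sum]
  exact Finset.sum_congr rfl fun l _ => by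
    show (c * M i l) * N l j = c * (M i l * N l j)
    rw [mul_assoc]

lemma mamul_smul (c : AA r) (M N : MA r n) : M * (c • N) = c • (M * N) := by
  apply Matrix.ext
  intro i j
  rw [Matrix.mul_apply]
  show _ = c • ((M * N) i j)
  rw [Matrix.mul_apply, smul_eq_mul, Finset.mul_sum]
  exact Finset.sum_congr rfl fun l _ => by
    show M i l * (c * N l j) = c * (M i l * N l j)
    rw [← mul_assoc, mul_comm (M i l) c, mul_assoc]

lemma masmul_smul (c e : AA r) (M : MA r n) : c • (e • M) = e • (c • M) := by
  apply Matrix.ext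
  intro i j
  show c • (e • M i j) = e • (c • M i j)
  rw [smul_eq_mul, smul_eq_mul, smul_eq_mul, smul_eq_mul, ← mul_assoc, mul_comm c e, mul_assoc]

/-- `D_a = ħ θ_a` on matrices. -/
def Dm (a : Fin r) (M : MA r n) : MA r n := hbarA r • thetaMat a M

lemma thetaMat_add (a : Fin r) (M N : MA r n) :
    thetaMat a (M + N) = thetaMat a M + thetaMat a N := by
  apply Matrix.ext
  intro i j
  show thetaA a (M i j + N i j) = thetaA a (M i j) + thetaA a (N i j)
  rw [thetaA_add]

lemma thetaMat_mul (a : Fin r) (M N : MA r n) :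
    thetaMat a (M * N) = thetaMat a M * N + M * thetaMat a N := by
  apply Matrix.ext
  intro i j
  show thetaA a ((M * N) i j) = (thetaMat a M * N) i j + (M * thetaMat a N) i j
  rw [Matrix.mul_apply, thetaA_sum, Matrix.mul_apply, Matrix.mul_apply, ← Finset.sum_add_distrib]
  refine Finset.sum_congr rfl fun l _ => ?_
  exact thetaA_mul a (M i l) (N l j)

lemma Dm_add (a : Fin r) (M N : MA r n) : Dm a (M + N) = Dm a M + Dm a N := by
  rw [Dm, Dm, Dm, thetaMat_add, masmul_add]

lemma Dm_mul (a : Fin r) (M N : MA r n) : Dm a (M * N) = Dm a M * N + M * Dm a N := by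
  rw [Dm, Dm, Dm, thetaMat_mul, masmul_add, masmul_mul, mamul_smul]

lemma thetaMat_smul_hbar (a : Fin r) (M : MA r n) :
    thetaMat a (hbarA r • M) = hbarA r • thetaMat a M := by
  apply Matrix.ext
  intro i j
  show thetaA a (hbarA r • M i j) = hbarA r • thetaA a (M i j)
  rw [smul_eq_mul, smul_eq_mul, hbarA, thetaA_smul]

lemma Dm_comm (a b : Fin r) (M : MA r n) : Dm a (Dm b M) = Dm b (Dm a M) := by
  rw [Dm, Dm, Dm, Dm, thetaMat_smul_hbar, thetaMat_smul_hbar, masmul_smul]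
  congr 1
  congr 1
  apply Matrix.ext
  intro i j
  exact thetaA_comm a b (M i j)


lemma unit_cancel {Q X : MA r n} (hQ : IsUnit Q) (h : Q * X = 0) : X = 0 := by
  obtain ⟨u, hu⟩ := hQ
  have h1 : (↑u⁻¹ : MA r n) * (Q * X) = X := by
    rw [← hu, ← mul_assoc, Units.inv_mul, one_mul]
  rw [h, mul_zero] at h1
  exact h1.symm

lemma rid1 {R : Type*} [Ring R] (Q Pa Pb Oa Ob xab xba : R) :
    Q * (xab - xba + (Pa * Pb - Pb * Pa))
      = (((Q * Pa - Oa * Q) * Pb + Q * xab) - ((Q * Pb - Ob * Q) * Pa + Q * xba))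
        + (Oa * Q * Pb - Ob * Q * Pa) := by noncomm_ring

lemma rid2 {R : Type*} [Ring R] (Q Pa Pb Oa Ob ya yb w : R) :
    ((ya * Q + Ob * (Q * Pa - Oa * Q) + w) - (yb * Q + Oa * (Q * Pb - Ob * Q) + w))
        + (Oa * Q * Pb - Ob * Q * Pa)
      = (ya - yb + (Oa * Ob - Ob * Oa)) * Q := by noncomm_ring

lemma flat_transfer {Ω : Fin r → MA r n} {Q : MA r n} {P : Fin r → MA r n}
    (hflat : IsFlat Ω) (hQ : IsUnit Q)
    (G : ∀ a, Q * P a = Ω a * Q + Dm a Q) :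
    ∀ a b, Dm a (P b) - Dm b (P a) + (P a * P b - P b * P a) = 0 := by
  intro a b
  have hDQ : ∀ c, Dm c Q = Q * P c - Ω c * Q := by
    intro c
    rw [G c]
    abel
  have e1 := congrArg (Dm b) (G a)
  rw [Dm_mul, Dm_add, Dm_mul, hDQ] at e1
  have e2 := congrArg (Dm a) (G b)
  rw [Dm_mul, Dm_add, Dm_mul, hDQ] at e2
  have hf : Dm a (Ω b) - Dm b (Ω a) + (Ω a * Ω b - Ω b * Ω a) = 0 := by
    rw [Dm, Dm, ← masmul_sub]
    exact hflat a b
  have hcomm := Dm_comm a b Q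
  have key : Q * (Dm a (P b) - Dm b (P a) + (P a * P b - P b * P a))
      = (Dm a (Ω b) - Dm b (Ω a) + (Ω a * Ω b - Ω b * Ω a)) * Q := by
    calc Q * (Dm a (P b) - Dm b (P a) + (P a * P b - P b * P a))
        = (((Q * P a - Ω a * Q) * P b + Q * Dm a (P b))
            - ((Q * P b - Ω b * Q) * P a + Q * Dm b (P a)))
          + (Ω a * Q * P b - Ω b * Q * P a) :=
        rid1 Q (P a) (P b) (Ω a) (Ω b) (Dm a (P b)) (Dm b (P a))
      _ = ((Dm a (Ω b) * Q + Ω b * (Q * P a - Ω a * Q) + Dm a (Dm b Q))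
            - (Dm b (Ω a) * Q + Ω a * (Q * P b - Ω b * Q) + Dm b (Dm a Q)))
          + (Ω a * Q * P b - Ω b * Q * P a) := by rw [e1, e2]
      _ = (Dm a (Ω b) - Dm b (Ω a) + (Ω a * Ω b - Ω b * Ω a)) * Q := by
          rw [hcomm]
          exact rid2 Q (P a) (P b) (Ω a) (Ω b) (Dm a (Ω b)) (Dm b (Ω a)) (Dm b (Dm a Q))
  rw [hf, zero_mul] at key
  exact unit_cancel hQ key

end CFp

namespace CFp
open HahnSeries

variable {r n : ℕ} (Ω : Fin r → MA r n)

def Wf : Fin r → Idx r → ML n := fun a d => cd (Ω a) d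

def QQ : MA r n := ofC (Qc (Wf Ω))

def PP (a : Fin r) : MA r n := ofC (Pc (Wf Ω) a)

lemma ccA_eq (x : AA r) : ccA x = x 0 := rfl

lemma map_ccA_eq_cd_zero (Q : MA r n) : Q.map ccA = cd Q 0 := by
  apply Matrix.ext
  intro i j
  rfl

lemma Wf_PH (hpoly : ∀ a, MatPolyH (Ω a)) : ∀ b d, PH (Wf Ω b d) :=
  fun b d i j => hpoly b i j d

lemma Wf0_CH (hcc : ∀ a i j, isConstH (ccA (Ω a i j))) : ∀ b, CH (Wf Ω b 0) :=
  fun b i j => hcc b i j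

lemma QQ_map_ccA : (QQ Ω).map ccA = 1 := by
  rw [map_ccA_eq_cd_zero, QQ, cd_ofC, Qc_zero]

lemma unit_of_map_one {Q : MA r n} (h : Q.map ccA = 1) : IsUnit Q := by
  rw [Matrix.isUnit_iff_isUnit_det, MvPowerSeries.isUnit_iff_constantCoeff]
  have h2 : (MvPowerSeries.constantCoeff : AA r →+* LS) Q.det = (Q.map ccA).det :=
    RingHom.map_det ccA Q
  rw [h2, h, Matrix.det_one]
  exact isUnit_one

lemma QQ_unit : IsUnit (QQ Ω) := unit_of_map_one (QQ_map_ccA Ω)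

lemma gaugeQQ : ∀ a, QQ Ω * PP Ω a = Ω a * QQ Ω + Dm a (QQ Ω) := by
  intro a
  apply cd_ext
  intro d
  rw [cd_mul, cd_add, Dm, cd_hbar_smul, cd_theta, cd_mul]
  simp only [QQ, PP, cd_ofC]
  exact E2 (Wf Ω) a d

lemma cd_Dm (a : Fin r) (M : MA r n) (d : Idx r) :
    cd (Dm a M) d = hbarL • ((d a) • cd M d) := by
  rw [Dm, cd_hbar_smul, cd_theta]

lemma flatP_cd (hflat : IsFlat Ω) (a b : Fin r) (d : Idx r) :
    hbarL • ((d a) • Pc (Wf Ω) b d) - hbarL • ((d b) • Pc (Wf Ω) a d)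
      + (∑ p ∈ Finset.HasAntidiagonal.antidiagonal d, Pc (Wf Ω) a p.1 * Pc (Wf Ω) b p.2
         - ∑ p ∈ Finset.HasAntidiagonal.antidiagonal d, Pc (Wf Ω) b p.1 * Pc (Wf Ω) a p.2) = 0 := by
  have h := flat_transfer hflat (QQ_unit Ω) (gaugeQQ Ω) a b
  have h2 := congrArg (fun M => cd M d) h
  simp only [cd_add, cd_sub, cd_Dm, cd_mul, cd_zero, PP, cd_ofC] at h2
  exact h2

lemma Pc_CH (hpoly : ∀ a, MatPolyH (Ω a)) (hcc : ∀ a i j, isConstH (ccA (Ω a i j)))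
    (hflat : IsFlat Ω) : ∀ d b, CH (Pc (Wf Ω) b d) := by
  have hW := Wf_PH Ω hpoly
  have hW0 := Wf0_CH Ω hcc
  have main : ∀ N : ℕ, ∀ d, wt d ≤ N → ∀ b, CH (Pc (Wf Ω) b d) := by
    intro N
    induction N with
    | zero =>
      intro d h b
      have h0 : d = 0 := wt_eq_zero.mp (by omega)
      subst h0
      rw [Pc_zero]
      exact hW0 b
    | succ N ih =>
      intro d h b
      rcases le_or_gt (wt d) N with h' | h'
      · exact ih d h' b
      · have hd : d ≠ 0 := fun h0 => by
          subst h0; rw [show wt (0 : Idx r) = 0 from rfl] at h'; omega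
        set a := pick d hd with hadef
        have hCHad : CH (Pc (Wf Ω) a d) := Pc_pick_CH (Wf Ω) hW hW0 hd
        have hCHb0 : ∀ b', CH (Pc (Wf Ω) b' 0) := fun b' => by rw [Pc_zero]; exact hW0 b'
        have hXPH : PH (Pc (Wf Ω) b d) := Pc_PH (Wf Ω) hW d b
        rw [CH_def]
        intro k hk0
        rcases lt_or_ge 0 k with hpos | hneg
        · exact (PH_def _).mp hXPH k hpos
        · refine K0 (m := d a) (Nat.pos_of_ne_zero (pick_spec d hd))
            (hk 0 (Wf Ω a 0)) (Pc (Wf Ω) b d) hXPH ?_ k (by omega)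
          intro k2 hk2
          have hid := flatP_cd Ω hflat a b d
          rw [sum_antidiagonal_split hd, sum_antidiagonal_split hd] at hid
          have h3 := congrArg (hk k2) hid
          simp only [hk_add, hk_sub, hk_hbar_smul, hk_nsmul, hk_sum, hk_zero] at h3
          have z1 : hk (k2 + 1) (Pc (Wf Ω) a d) = 0 := (CH_def _).mp hCHad (k2+1) (by omega)
          have z2 : hk k2 (Pc (Wf Ω) a d * Pc (Wf Ω) b 0) = 0 :=
            (CH_def _).mp (hCHad.mul (hCHb0 b)) k2 (by omega)
          have z3 : hk k2 (Pc (Wf Ω) b 0 * Pc (Wf Ω) a d) = 0 :=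
            (CH_def _).mp ((hCHb0 b).mul hCHad) k2 (by omega)
          have z4 : ∑ p ∈ (Finset.HasAntidiagonal.antidiagonal d).filter (fun p => p.1 ≠ 0 ∧ p.2 ≠ 0),
              hk k2 (Pc (Wf Ω) a p.1 * Pc (Wf Ω) b p.2) = 0 := by
            refine Finset.sum_eq_zero fun p hp => ?_
            obtain ⟨hsum, hw1, hw2⟩ := mid_mem hp
            exact (CH_def _).mp ((ih p.1 (by omega) a).mul (ih p.2 (by omega) b)) k2 (by omega)
          have z5 : ∑ p ∈ (Finset.HasAntidiagonal.antidiagonal d).filter (fun p => p.1 ≠ 0 ∧ p.2 ≠ 0),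
              hk k2 (Pc (Wf Ω) b p.1 * Pc (Wf Ω) a p.2) = 0 := by
            refine Finset.sum_eq_zero fun p hp => ?_
            obtain ⟨hsum, hw1, hw2⟩ := mid_mem hp
            exact (CH_def _).mp ((ih p.1 (by omega) b).mul (ih p.2 (by omega) a)) k2 (by omega)
          have z6 : hk k2 (Pc (Wf Ω) a 0 * Pc (Wf Ω) b d)
              = hk 0 (Wf Ω a 0) * hk k2 (Pc (Wf Ω) b d) := by
            rw [Pc_zero, hk_const_mul k2 (hW0 a)]
          have z7 : hk k2 (Pc (Wf Ω) b d * Pc (Wf Ω) a 0)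
              = hk k2 (Pc (Wf Ω) b d) * hk 0 (Wf Ω a 0) := by
            rw [Pc_zero, hk_mul_const k2 (hW0 a)]
          rw [z1, z2, z3, z4, z5, z6, z7] at h3
          calc (d a) • hk (k2 + 1) (Pc (Wf Ω) b d)
                + (hk 0 (Wf Ω a 0) * hk k2 (Pc (Wf Ω) b d)
                  - hk k2 (Pc (Wf Ω) b d) * hk 0 (Wf Ω a 0))
              = (d a) • hk (k2 + 1) (Pc (Wf Ω) b d) - (d b) • (0 : Mc n)
                + (hk 0 (Wf Ω a 0) * hk k2 (Pc (Wf Ω) b d) + 0 + 0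
                  - (0 + hk k2 (Pc (Wf Ω) b d) * hk 0 (Wf Ω a 0) + 0)) := by
                rw [smul_zero]; abel
            _ = 0 := h3
  exact fun d b => main (wt d) d le_rfl b

end CFp

namespace CFp
open HahnSeries

variable {r n : ℕ}

lemma mlsmul_sub (c : LS) (X Y : ML n) : c • (X - Y) = c • X - c • Y := by
  apply Matrix.ext
  intro i j
  show c • (X i j - Y i j) = c • X i j - c • Y i j
  rw [smul_eq_mul, smul_eq_mul, smul_eq_mul, mul_sub]

lemma mlnsmul_sub (m : ℕ) (X Y : ML n) : m • (X - Y) = m • X - m • Y := by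
  apply Matrix.ext
  intro i j
  show m • (X i j - Y i j) = m • X i j - m • Y i j
  rw [← Nat.cast_smul_eq_nsmul LS, ← Nat.cast_smul_eq_nsmul LS, ← Nat.cast_smul_eq_nsmul LS,
    smul_eq_mul, smul_eq_mul, smul_eq_mul, mul_sub]

lemma op_sub (m : ℕ) (A X X' S : ML n) :
    (hbarL • (m • X') + (A * X' - X' * A) + S) - (hbarL • (m • X) + (A * X - X * A) + S)
      = hbarL • (m • (X' - X)) + (A * (X' - X) - (X' - X) * A) := by
  rw [mlnsmul_sub, mlsmul_sub, mul_sub, sub_mul]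
  abel

/-- extended uniqueness kernel : forced vanishing. -/
lemma K0ext {m : ℕ} (hm : 0 < m) {A X Z : ML n} (hA : CH A) (hX : PH X) (hZ : CH Z)
    (h : hbarL • (m • X) + (A * X - X * A) = Z) : X = 0 := by
  have hco : ∀ k : ℤ, m • hk (k+1) X + (hk 0 A * hk k X - hk k X * hk 0 A) = hk k Z := by
    intro k
    rw [← hk_op m hA X k, h]
  have hK : ∀ k : ℤ, k ≤ -1 → hk k X = 0 := by
    refine K0 hm (hk 0 A) X hX ?_
    intro k hk2
    rw [hco k]
    exact (CH_def _).mp hZ k (by omega)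
  have h0 : hk 0 X = 0 := by
    have e := hco (-1)
    rw [hK (-1) (by omega), mul_zero, zero_mul, sub_zero, add_zero,
      (CH_def _).mp hZ (-1) (by omega)] at e
    have : ((-1 : ℤ) + 1) = 0 := by omega
    rw [this] at e
    exact nsmul_eq_zero hm e
  rw [hk_eq_zero_iff]
  intro k
  rcases lt_trichotomy k 0 with h1 | h1 | h1
  · exact hK k (by omega)
  · rw [h1]; exact h0
  · exact (PH_def _).mp hX k h1

end CFp

namespace CFp
open HahnSeries

variable {r n : ℕ} (Ω : Fin r → MA r n)

lemma PPeq :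
    ∀ a, Ring.inverse (QQ Ω) * Ω a * QQ Ω + hbarA r • (Ring.inverse (QQ Ω) * thetaMat a (QQ Ω))
      = PP Ω a := by
  intro a
  have hu := QQ_unit Ω
  have h := gaugeQQ Ω a
  have h2 := congrArg (fun M => Ring.inverse (QQ Ω) * M) h
  rw [← mul_assoc, Ring.inverse_mul_cancel _ hu, one_mul, mul_add] at h2
  rw [h2, Dm, mamul_smul, ← mul_assoc]

/-- the gauge equation for an arbitrary admissible `Q'`. -/
lemma gauge_of_inverse {Q' : MA r n} (hu : IsUnit Q') (a : Fin r) :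
    Q' * (Ring.inverse Q' * Ω a * Q' + hbarA r • (Ring.inverse Q' * thetaMat a Q'))
      = Ω a * Q' + Dm a Q' := by
  rw [mul_add, mamul_smul, ← mul_assoc, ← mul_assoc, ← mul_assoc,
    Ring.mul_inverse_cancel _ hu, one_mul, one_mul, Dm]

lemma uniqueness (hpoly : ∀ a, MatPolyH (Ω a)) (hcc : ∀ a i j, isConstH (ccA (Ω a i j)))
    (hflat : IsFlat Ω) {Q' : MA r n} (h1 : MatPolyH Q') (h2 : Q'.map ccA = 1)
    (h3 : ∀ a, MatConstH
      (Ring.inverse Q' * Ω a * Q' + hbarA r • (Ring.inverse Q' * thetaMat a Q'))) :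
    Q' = QQ Ω := by
  have hW := Wf_PH Ω hpoly
  have hW0 := Wf0_CH Ω hcc
  have hPcCH := Pc_CH Ω hpoly hcc hflat
  have hu : IsUnit Q' := unit_of_map_one h2
  set P' : Fin r → MA r n :=
    fun a => Ring.inverse Q' * Ω a * Q' + hbarA r • (Ring.inverse Q' * thetaMat a Q') with hP'def
  have hG : ∀ a, Q' * P' a = Ω a * Q' + Dm a Q' := fun a => gauge_of_inverse Ω hu a
  have hP'CH : ∀ b d, CH (cd (P' b) d) := fun b d i j => h3 b i j d
  have hQ'PH : ∀ d, PH (cd Q' d) := fun d i j => h1 i j d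
  have hQ'0 : cd Q' 0 = 1 := by rw [← map_ccA_eq_cd_zero, h2]
  have hE2' : ∀ b d, ∑ p ∈ Finset.HasAntidiagonal.antidiagonal d, cd Q' p.1 * cd (P' b) p.2
      = ∑ p ∈ Finset.HasAntidiagonal.antidiagonal d, cd (Ω b) p.1 * cd Q' p.2
        + hbarL • ((d b) • cd Q' d) := by
    intro b d
    have h4 := congrArg (fun M => cd M d) (hG b)
    simp only [cd_mul, cd_add, cd_Dm] at h4
    exact h4
  have hP'0 : ∀ b, cd (P' b) 0 = Wf Ω b 0 := by
    intro b
    have h5 := hE2' b 0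
    rw [Finsupp.antidiagonal_zero, Finset.sum_singleton, Finset.sum_singleton] at h5
    simp only [hQ'0, one_mul, mul_one] at h5
    rw [show ((0 : Idx r) b) = 0 from rfl, zero_nsmul,
      show hbarL • (0 : ML n) = 0 by ext i j; simp, add_zero] at h5
    exact h5
  have hP'eq : ∀ b d, d ≠ 0 → cd (P' b) d
      = hbarL • ((d b) • cd Q' d) + (Wf Ω b 0 * cd Q' d - cd Q' d * Wf Ω b 0)
        + (cd (Ω b) d + ∑ p ∈ mid d, (cd (Ω b) p.1 * cd Q' p.2 - cd Q' p.1 * cd (P' b) p.2)) := by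
    intro b d hd
    have e := hE2' b d
    rw [← sub_eq_zero]
    calc cd (P' b) d
          - (hbarL • ((d b) • cd Q' d) + (Wf Ω b 0 * cd Q' d - cd Q' d * Wf Ω b 0)
            + (cd (Ω b) d + ∑ p ∈ mid d, (cd (Ω b) p.1 * cd Q' p.2 - cd Q' p.1 * cd (P' b) p.2)))
        = (∑ p ∈ Finset.HasAntidiagonal.antidiagonal d, cd Q' p.1 * cd (P' b) p.2)
          - (∑ p ∈ Finset.HasAntidiagonal.antidiagonal d, cd (Ω b) p.1 * cd Q' p.2
            + hbarL • ((d b) • cd Q' d)) := by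
          rw [sum_antidiagonal_split hd (fun p => cd Q' p.1 * cd (P' b) p.2),
            sum_antidiagonal_split hd (fun p => cd (Ω b) p.1 * cd Q' p.2)]
          simp only [mid, Wf, hQ'0, hP'0, one_mul, mul_one, Finset.sum_sub_distrib]
          abel
      _ = 0 := sub_eq_zero_of_eq e
  -- the solved form of the canonical construction
  have hPceq : ∀ b d, d ≠ 0 → Pc (Wf Ω) b d
      = hbarL • ((d b) • Qc (Wf Ω) d)
        + (Wf Ω b 0 * Qc (Wf Ω) d - Qc (Wf Ω) d * Wf Ω b 0)
        + (Wf Ω b d + ∑ p ∈ mid d,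
            (Wf Ω b p.1 * Qc (Wf Ω) p.2 - Qc (Wf Ω) p.1 * Pc (Wf Ω) b p.2)) := by
    intro b d hd
    have h6 := Pc_eq (Wf Ω) hd b
    rw [Sb] at h6
    exact h6
  -- main induction
  have main : ∀ N : ℕ, ∀ d, wt d ≤ N →
      cd Q' d = Qc (Wf Ω) d ∧ ∀ b, cd (P' b) d = Pc (Wf Ω) b d := by
    intro N
    induction N with
    | zero =>
      intro d h
      have h0 : d = 0 := wt_eq_zero.mp (by omega)
      subst h0
      refine ⟨by rw [hQ'0, Qc_zero], fun b => by rw [hP'0 b, Pc_zero]⟩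
    | succ N ih =>
      intro d h
      rcases le_or_gt (wt d) N with h' | h'
      · exact ih d h'
      · have hd : d ≠ 0 := fun h0 => by
          subst h0; rw [show wt (0 : Idx r) = 0 from rfl] at h'; omega
        have hSb : ∀ b, cd (Ω b) d + ∑ p ∈ mid d,
            (cd (Ω b) p.1 * cd Q' p.2 - cd Q' p.1 * cd (P' b) p.2)
            = Wf Ω b d + ∑ p ∈ mid d,
              (Wf Ω b p.1 * Qc (Wf Ω) p.2 - Qc (Wf Ω) p.1 * Pc (Wf Ω) b p.2) := by
          intro b
          congr 1
          refine Finset.sum_congr rfl fun p hp => ?_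
          obtain ⟨hsum, hw1, hw2⟩ := mid_mem hp
          rw [(ih p.2 (by omega)).1, (ih p.1 (by omega)).1, ((ih p.2 (by omega)).2 b)]
          rfl
        set a := pick d hd with hadef
        have hma : 0 < d a := Nat.pos_of_ne_zero (pick_spec d hd)
        have hQeq : cd Q' d = Qc (Wf Ω) d := by
          have hdiffeq : hbarL • ((d a) • (cd Q' d - Qc (Wf Ω) d))
              + (Wf Ω a 0 * (cd Q' d - Qc (Wf Ω) d)
                - (cd Q' d - Qc (Wf Ω) d) * Wf Ω a 0)
              = cd (P' a) d - Pc (Wf Ω) a d := by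
            rw [hP'eq a d hd, hPceq a d hd, hSb a]
            exact (op_sub (d a) (Wf Ω a 0) (Qc (Wf Ω) d) (cd Q' d) _).symm
          have hZ : CH (cd (P' a) d - Pc (Wf Ω) a d) :=
            (hP'CH a d).sub (hPcCH d a)
          have hXPH : PH (cd Q' d - Qc (Wf Ω) d) :=
            (hQ'PH d).sub (Qc_PH (Wf Ω) hW d)
          have := K0ext hma (hW0 a) hXPH hZ hdiffeq
          exact sub_eq_zero.mp this
        refine ⟨hQeq, fun b => ?_⟩
        rw [hP'eq b d hd, hPceq b d hd, hSb b, hQeq]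
  apply cd_ext
  intro d
  rw [(main (wt d) d le_rfl).1]
  rfl

end CFp

/-- **Existence and uniqueness of the canonical frame** (Theorem 3.8).
Let `Ω_a ∈ Mat_n(ℂ[ħ][[q]])` be flat connection matrices whose constant terms
`Ω_a|_{q=0}` are independent of `ħ`.  Then there is a unique gauge
transformation `Q ∈ Mat_n(ℂ[ħ][[q]])` with `Q|_{q=0} = Id` (hence `Q`
invertible) such that every `Ω̂_a = Q⁻¹·Ω_a·Q + ħ·Q⁻¹·θ_a Q` is independent
of `ħ`, i.e. has entries in `ℂ[[q]]`. -/
theorem canonical_frame_exists_unique {r n : ℕ} (hr : 1 ≤ r) (hn : 1 ≤ n)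
    (Ω : Fin r → Matrix (Fin n) (Fin n) (AA r))
    (hpoly : ∀ a, MatPolyH (Ω a))
    (hflat : IsFlat Ω)
    (hcc : ∀ a i j, isConstH (ccA (Ω a i j))) :
    ∃! Q : Matrix (Fin n) (Fin n) (AA r),
      MatPolyH Q ∧ Q.map ccA = 1 ∧
      ∀ a, MatConstH
        (Ring.inverse Q * Ω a * Q + hbarA r • (Ring.inverse Q * thetaMat a Q)) := by
  refine ⟨CFp.QQ Ω, ⟨?_, CFp.QQ_map_ccA Ω, ?_⟩, ?_⟩
  · intro i j d
    exact CFp.Qc_PH (CFp.Wf Ω) (CFp.Wf_PH Ω hpoly) d i j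
  · intro a i j d
    rw [CFp.PPeq Ω a]
    exact CFp.Pc_CH Ω hpoly hcc hflat d a i j
  · rintro Q' ⟨h1, h2, h3⟩
    exact CFp.uniqueness Ω hpoly hcc hflat h1 h2 h3
end
end

section
/- Let Ω_1,…,Ω_r ∈ Mat_n(ℂ[[q^1,…,q^r]]) (independent of ħ) satisfy θ_aΩ_b = θ_bΩ_a and Ω_aΩ_b = Ω_bΩ_a for all a, b. Let e_0 ∈ ℂ^n, set b_a := (Ω_a|_{q=0})·e_0, and assume the vectors e_0, b_1, …, b_r are linearly independent over ℂ. Assume further there are F_a ∈ m and G^b_a ∈ ℂ[[q]] such that Ω_a·e_0 = −F_a·e_0 + Σ_b G^b_a·b_b as vectors of power series, for every a. Then there exist a unique F ∈ m with F_a = θ_a F for all a, and unique δ^1,…,δ^r ∈ m with G^b_a = δ^b_a + θ_a δ^b for all a, b; that is, setting q̂^b := q^b·exp(δ^b), the matrix (G^b_a) is the log-Jacobi matrix ∂log q̂^b/∂log q^a of a formal coordinate change, and the new coordinates q̂^b are unique up to multiplication by nonzero constants. -/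
/-!
Work over ℂ.  `OO r = ℂ[[q¹,…,qʳ]]` is the ring of formal power series,
`m` its maximal ideal (power series with zero constant term), and
`θ_a = qᵃ·∂/∂qᵃ` the logarithmic partial derivative.
-/

noncomputable section

/-- `θ_a` acting entrywise on matrices over `ℂ[[q]]`. -/
def thetaOM {r n : ℕ} (a : Fin r) (M : Matrix (Fin n) (Fin n) (OO r)) :
    Matrix (Fin n) (Fin n) (OO r) :=
  Matrix.of fun i j => thetaO a (M i j)

/-- Candidate primitive: `P d = H a d / d a` for any `a` with `d a ≠ 0`. -/
noncomputable def primO {r : ℕ} (H : Fin r → OO r) : OO r :=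
  fun d => if h : ∃ a, d a ≠ 0 then ((d h.choose : ℂ))⁻¹ * H h.choose d else 0

/-- Key integration lemma: a family `H_a` with zero constant terms satisfying the
symmetry `d_c·H_a(d) = d_a·H_c(d)` (the coefficientwise form of `θ_c H_a = θ_a H_c`)
has a unique primitive `P ∈ m` with `H_a = θ_a P`. -/
lemma primitive_existsUnique {r : ℕ} (H : Fin r → OO r)
    (h0 : ∀ a, H a 0 = 0)
    (hsym : ∀ a c (d : Fin r →₀ ℕ), (d c : ℂ) * H a d = (d a : ℂ) * H c d) :
    ∃! P : OO r, ccO P = 0 ∧ ∀ a, H a = thetaO a P := by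
  have hvan : ∀ (a : Fin r) (d : Fin r →₀ ℕ), d a = 0 → H a d = 0 := by
    intro a d hda
    by_cases hd : ∃ c, d c ≠ 0
    · obtain ⟨c, hc⟩ := hd
      have h := hsym a c d
      rw [hda] at h
      simp only [Nat.cast_zero, zero_mul] at h
      rcases mul_eq_zero.mp h with h' | h'
      · exact absurd (by exact_mod_cast h') hc
      · exact h'
    · push_neg at hd
      have hdz : d = 0 := Finsupp.ext fun c => hd c
      rw [hdz]; exact h0 a
  refine ⟨primO H, ⟨?_, ?_⟩, ?_⟩
  · rw [show ccO (primO H) = primO H 0 from (MvPowerSeries.coeff_zero_eq_constantCoeff_apply (primO H)).symm]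
    rw [primO, dif_neg]
    push_neg
    intro a; rfl
  · intro a
    funext d
    show H a d = (d a : ℂ) * primO H d
    by_cases hda : d a = 0
    · rw [hvan a d hda, hda]; simp
    · have hex : ∃ c, d c ≠ 0 := ⟨a, hda⟩
      rw [primO, dif_pos hex]
      have hc : d hex.choose ≠ 0 := hex.choose_spec
      have hcc : (d hex.choose : ℂ) ≠ 0 := by exact_mod_cast hc
      have hs := hsym hex.choose a d
      -- hs : d a * H (choose) d = d (choose) * H a d
      field_simp
      linear_combination -hs
  · rintro Q ⟨hQ0, hQ⟩
    funext d
    show Q d = primO H d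
    by_cases hd : ∃ c, d c ≠ 0
    · obtain ⟨c, hc⟩ := hd
      have h1 : H c d = (d c : ℂ) * Q d := by rw [hQ c]; rfl
      have hex : ∃ a, d a ≠ 0 := ⟨c, hc⟩
      rw [primO, dif_pos hex]
      have ha : d hex.choose ≠ 0 := hex.choose_spec
      have hcc : (d c : ℂ) ≠ 0 := by exact_mod_cast hc
      have hac : (d hex.choose : ℂ) ≠ 0 := by exact_mod_cast ha
      have hs := hsym hex.choose c d
      -- hs : d c * H (choose) d = d (choose) * H c d
      rw [h1] at hs
      have h2 : H hex.choose d = (d hex.choose : ℂ) * Q d :=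
        mul_left_cancel₀ hcc (by linear_combination hs)
      rw [h2]
      field_simp
    · push_neg at hd
      have hdz : d = 0 := Finsupp.ext fun c => hd c
      subst hdz
      have hp : primO H 0 = 0 := by
        rw [primO, dif_neg]; push_neg; intro a; rfl
      rw [hp]; exact (MvPowerSeries.coeff_zero_eq_constantCoeff_apply Q).trans hQ0

/-- **Existence and uniqueness of the mirror transformation** (Theorem 3.14).
Let `Ω_a ∈ Mat_n(ℂ[[q]])` (the `ħ`-independent connection matrices of a
canonical frame) satisfy `θ_aΩ_b = θ_bΩ_a` and `[Ω_a, Ω_b] = 0`; let `e₀` be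
such that `e₀, p_1e₀, …, p_re₀` (with `p_a = Ω_a|_{q=0}`, `b_a = p_ae₀`) are
linearly independent, and suppose
`Ω_a e₀ = −F_a e₀ + Σ_b G^b_a·b_b` with `F_a ∈ m`, `G^b_a ∈ ℂ[[q]]`.
Then there are a unique `F ∈ m` with `F_a = θ_a F` and unique `δ¹,…,δʳ ∈ m`
with `G^b_a = δ^b_a + θ_a δ^b`; i.e. `(G^b_a)` is the log-Jacobi matrix of the
coordinate change `q̂^b = q^b·exp(δ^b)`, the new coordinates being unique up to
nonzero constant multiples. -/
theorem mirror_transformation {r n : ℕ} (hr : 1 ≤ r) (hn : 1 ≤ n)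
    (Ω : Fin r → Matrix (Fin n) (Fin n) (OO r))
    (hflat1 : ∀ a b, thetaOM a (Ω b) = thetaOM b (Ω a))
    (hflat2 : ∀ a b, Ω a * Ω b = Ω b * Ω a)
    (e0 : Fin n → ℂ)
    (hind : LinearIndependent ℂ
      (Fin.cons e0 (fun a => ((Ω a).map ccO).mulVec e0) : Fin (r + 1) → (Fin n → ℂ)))
    (F : Fin r → OO r) (hFm : ∀ a, ccO (F a) = 0)
    (G : Fin r → Fin r → OO r)
    (hshape : ∀ a i, ((Ω a).mulVec (fun i => MvPowerSeries.C (σ := Fin r) (R := ℂ) (e0 i))) i =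
      -(F a) * MvPowerSeries.C (σ := Fin r) (R := ℂ) (e0 i) +
      ∑ b, G b a * MvPowerSeries.C (σ := Fin r) (R := ℂ) ((((Ω b).map ccO).mulVec e0) i)) :
    (∃! F' : OO r, ccO F' = 0 ∧ ∀ a, F a = thetaO a F') ∧
    (∃! δ : Fin r → OO r, (∀ b, ccO (δ b) = 0) ∧
      ∀ a b, G b a = (if a = b then 1 else 0) + thetaO a (δ b)) := by
  classical
  set bb : Fin r → Fin n → ℂ := fun a => ((Ω a).map ccO).mulVec e0 with hbb
  -- Linear independence, in usable form.
  have hli : ∀ (c0 : ℂ) (c : Fin r → ℂ),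
      (∀ i, c0 * e0 i + ∑ a, c a * bb a i = 0) → c0 = 0 ∧ ∀ a, c a = 0 := by
    intro c0 c hc
    rw [Fintype.linearIndependent_iff] at hind
    have h := hind (Fin.cons c0 c) (by
      funext j
      simpa [Fin.sum_univ_succ, Finset.sum_apply, Pi.smul_apply, smul_eq_mul] using hc j)
    refine ⟨by simpa using h 0, fun a => by simpa using h a.succ⟩
  -- Coefficientwise form of the shape hypothesis.
  have key : ∀ (a : Fin r) (d : Fin r →₀ ℕ) (i : Fin n),
      ∑ j, (Ω a i j) d * e0 j =
        -(F a d) * e0 i + ∑ b, (G b a) d * bb b i := by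
    intro a d i
    have hL : MvPowerSeries.coeff d
        (((Ω a).mulVec (fun i => MvPowerSeries.C (σ := Fin r) (R := ℂ) (e0 i))) i)
        = ∑ j, (Ω a i j) d * e0 j := by
      show MvPowerSeries.coeff d
        (∑ j, Ω a i j * MvPowerSeries.C (σ := Fin r) (R := ℂ) (e0 j)) = _
      rw [map_sum]
      exact Finset.sum_congr rfl fun j _ => MvPowerSeries.coeff_mul_C d _ _
    have hR : MvPowerSeries.coeff d
        (-(F a) * MvPowerSeries.C (σ := Fin r) (R := ℂ) (e0 i) +
          ∑ b, G b a * MvPowerSeries.C (σ := Fin r) (R := ℂ) ((((Ω b).map ccO).mulVec e0) i))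
        = -(F a d) * e0 i + ∑ b, (G b a) d * bb b i := by
      rw [map_add, map_sum]
      congr 1
      · rw [MvPowerSeries.coeff_mul_C, map_neg]; rfl
      · exact Finset.sum_congr rfl fun b _ => MvPowerSeries.coeff_mul_C d _ _
    rw [← hL, hshape a i, hR]
  -- Coefficientwise form of flatness.
  have hflatc : ∀ (a c : Fin r) (i j : Fin n) (d : Fin r →₀ ℕ),
      (d a : ℂ) * (Ω c i j) d = (d c : ℂ) * (Ω a i j) d := by
    intro a c i j d
    have h2 : thetaOM a (Ω c) i j = thetaOM c (Ω a) i j := by rw [hflat1 a c]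
    exact congrFun h2 d
  -- Symmetry of the families F and G, via linear independence.
  have hsymall : ∀ (a c : Fin r) (d : Fin r →₀ ℕ),
      ((d c : ℂ) * F a d = (d a : ℂ) * F c d) ∧
      ∀ b, (d c : ℂ) * G b a d = (d a : ℂ) * G b c d := by
    intro a c d
    have hv2 : ∀ i, ((d c : ℂ) * (-(F a d)) - (d a : ℂ) * (-(F c d))) * e0 i
        + ∑ b, ((d c : ℂ) * G b a d - (d a : ℂ) * G b c d) * bb b i = 0 := by
      intro i
      have hv : (d c : ℂ) * (∑ j, (Ω a i j) d * e0 j)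
          = (d a : ℂ) * (∑ j, (Ω c i j) d * e0 j) := by
        rw [Finset.mul_sum, Finset.mul_sum]
        refine Finset.sum_congr rfl fun j _ => ?_
        rw [← mul_assoc, ← mul_assoc, ← hflatc a c i j d]
      rw [key a d i, key c d i] at hv
      have e1 : ∑ b, ((d c : ℂ) * G b a d - (d a : ℂ) * G b c d) * bb b i
          = (d c : ℂ) * (∑ b, G b a d * bb b i)
            - (d a : ℂ) * (∑ b, G b c d * bb b i) := by
        rw [Finset.mul_sum, Finset.mul_sum, ← Finset.sum_sub_distrib]
        exact Finset.sum_congr rfl fun b _ => by ring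
      rw [e1]
      linear_combination hv
    obtain ⟨h0', hc'⟩ := hli _ _ hv2
    exact ⟨by linear_combination -h0', fun b => by linear_combination hc' b⟩
  -- Constant terms.
  have hF0 : ∀ a, F a 0 = 0 := fun a => (MvPowerSeries.coeff_zero_eq_constantCoeff_apply (F a)).trans (hFm a)
  have hbbeq : ∀ (a : Fin r) (i : Fin n), bb a i = ∑ j, (Ω a i j) 0 * e0 j := by
    intro a i
    simp [hbb, Matrix.mulVec, dotProduct, Matrix.map_apply, ccO]
    rfl
  have hG0 : ∀ a b, G b a 0 = if a = b then 1 else 0 := by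
    intro a b
    have hv2 : ∀ i, (0 : ℂ) * e0 i
        + ∑ c, (G c a 0 - if a = c then 1 else 0) * bb c i = 0 := by
      intro i
      have hk := key a 0 i
      rw [hF0 a, ← hbbeq a i] at hk
      have e2 : ∑ c, ((G c a 0 - if a = c then 1 else 0) * bb c i)
          = (∑ c, G c a 0 * bb c i) - bb a i := by
        simp only [sub_mul]
        rw [Finset.sum_sub_distrib]
        congr 1
        simp [Finset.sum_ite_eq, ite_mul]
      rw [zero_mul, zero_add, e2]
      linear_combination -hk
    obtain ⟨_, hc'⟩ := hli _ _ hv2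
    exact sub_eq_zero.mp (hc' b)
  -- Part 1: the primitive F'.
  constructor
  · exact primitive_existsUnique F hF0 fun a c d => (hsymall a c d).1
  -- Part 2: the primitives δᵇ.
  · set H : Fin r → Fin r → OO r := fun b a => G b a - (if a = b then 1 else 0)
      with hH
    have hone : ∀ (c : Fin r) (d : Fin r →₀ ℕ) (a b : Fin r),
        (d c : ℂ) * ((if a = b then (1 : OO r) else 0) d) = 0 := by
      intro c d a b
      by_cases hd : d = 0
      · subst hd; simp
      · have hz : ((if a = b then (1 : OO r) else 0) d) = 0 := by
          split
          · show MvPowerSeries.coeff d 1 = 0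
            rw [MvPowerSeries.coeff_one, if_neg hd]
          · rfl
        rw [hz, mul_zero]
    have hH0 : ∀ b a, H b a 0 = 0 := by
      intro b a
      show G b a 0 - (if a = b then (1 : OO r) else 0) 0 = 0
      have h1 : ((if a = b then (1 : OO r) else 0) 0) = if a = b then 1 else 0 := by
        split
        · show MvPowerSeries.coeff 0 (1 : OO r) = 1
          rw [MvPowerSeries.coeff_one, if_pos rfl]
        · rfl
      rw [h1, hG0 a b, sub_self]
    have hHsym : ∀ b a c (d : Fin r →₀ ℕ),
        (d c : ℂ) * H b a d = (d a : ℂ) * H b c d := by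
      intro b a c d
      show (d c : ℂ) * (G b a d - (if a = b then (1 : OO r) else 0) d)
          = (d a : ℂ) * (G b c d - (if c = b then (1 : OO r) else 0) d)
      rw [mul_sub, mul_sub, hone c d a b, hone a d c b, sub_zero, sub_zero]
      exact (hsymall a c d).2 b
    have huniq := fun b => primitive_existsUnique (H b) (hH0 b) (hHsym b)
    choose P hP hPu using huniq
    refine ⟨P, ⟨fun b => (hP b).1, fun a b => ?_⟩, ?_⟩
    · have h := (hP b).2 a
      rw [hH] at h
      simp only at h
      rw [← h]
      ring
    · rintro Q ⟨hQ0, hQ⟩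
      funext b
      refine hPu b (Q b) ⟨hQ0 b, fun a => ?_⟩
      rw [hH]
      simp only
      rw [hQ a b]
      ring
end
end
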